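/- arXiv:1712.07231 — 6 statements merged into one kernel-verified Lean document; each statement's English description precedes it below -/
import Mathlib

section
/- Under Assumption A (for every $A\in\mathscr{A}$ and $s\ge 0$, $\bigcup_{x\in A}\Phi_x(s)$ is precompact in $\mathcal{E}$), if the family $\{X^\epsilon_x\}$ satisfies the uniform Laplace principle over $\mathscr{A}$, then the Freidlin-Wentzell uniform lower bound holds: for every $A\in\mathscr{A}$, $s_0>0$, $\delta>0$, $\liminf_{\epsilon\to 0}\inf_{x\in A}\inf_{\varphi\in\Phi_x(s_0)}\big(a(\epsilon)\log\mathbb{P}(\rho(X^\epsilon_x,\varphi)<\delta)+I_x(\varphi)\big)\ge 0$. -/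
open MeasureTheory Filter Topology
open scoped ENNReal NNReal BoundedContinuousFunction

noncomputable def fwBump {E : Type*} [MetricSpace E] (M r : ℝ) (t : E) : E →ᵇ ℝ :=
  BoundedContinuousFunction.mkOfBound
    ⟨fun ψ => M * min 1 (max 0 (dist ψ t / r - 1)), by fun_prop⟩ |M|
    (fun x y => by
      simp only [ContinuousMap.coe_mk, Real.dist_eq, ← mul_sub, abs_mul]
      have h1 : ∀ z : E, min 1 (max 0 (dist z t / r - 1)) ∈ Set.Icc (0:ℝ) 1 :=
        fun z => ⟨le_min zero_le_one (le_max_left _ _), min_le_left _ _⟩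
      have hx := h1 x; have hy := h1 y
      have : |min 1 (max 0 (dist x t / r - 1)) - min 1 (max 0 (dist y t / r - 1))| ≤ 1 := by
        rw [abs_le]; constructor <;> [linarith [hx.1, hy.2]; linarith [hx.2, hy.1]]
      calc |M| * |_| ≤ |M| * 1 := by exact mul_le_mul_of_nonneg_left this (abs_nonneg M)
        _ = |M| := mul_one _)

theorem fwBump_apply {E : Type*} [MetricSpace E] (M r : ℝ) (t : E) (ψ : E) :
    fwBump M r t ψ = M * min 1 (max 0 (dist ψ t / r - 1)) := rfl

theorem fwBump_nonneg {E : Type*} [MetricSpace E] {M : ℝ} (hM : 0 ≤ M) (r : ℝ) (t ψ : E) :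
    0 ≤ fwBump M r t ψ :=
  mul_nonneg hM (le_min zero_le_one (le_max_left _ _))

theorem fwBump_le {E : Type*} [MetricSpace E] {M : ℝ} (hM : 0 ≤ M) (r : ℝ) (t ψ : E) :
    fwBump M r t ψ ≤ M := by
  rw [fwBump_apply]
  nlinarith [min_le_left (1:ℝ) (max 0 (dist ψ t / r - 1))]

theorem fwBump_eq_zero {E : Type*} [MetricSpace E] (M : ℝ) {r : ℝ} (hr : 0 < r) {t ψ : E}
    (h : dist ψ t ≤ r) : fwBump M r t ψ = 0 := by
  rw [fwBump_apply]
  have : dist ψ t / r - 1 ≤ 0 := by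
    rw [sub_nonpos, div_le_one hr]; exact h
  rw [max_eq_left this, min_eq_right (le_refl (0:ℝ) |>.trans zero_le_one), mul_zero]

theorem fwBump_eq_of_far {E : Type*} [MetricSpace E] (M : ℝ) {r : ℝ} (hr : 0 < r) {t ψ : E}
    (h : 2 * r ≤ dist ψ t) : fwBump M r t ψ = M := by
  rw [fwBump_apply]
  have h2 : (1:ℝ) ≤ dist ψ t / r - 1 := by
    rw [le_sub_iff_add_le, le_div_iff₀ hr]; linarith
  rw [max_eq_right (zero_le_one.trans h2), min_eq_left h2, mul_one]


/-- Under Assumption A (precompact unions of level sets), the uniform Laplace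
principle implies the Freidlin-Wentzell uniform lower bound. -/
theorem ulp_implies_fw_uniform_lower
    {E : Type*} [MetricSpace E] [PolishSpace E] [MeasurableSpace E] [BorelSpace E]
    {E0 : Type*} {Ω : Type*} [MeasurableSpace Ω] (μ : Measure Ω) [IsProbabilityMeasure μ]
    (X : ℝ → E0 → Ω → E) (hX : ∀ ε x, Measurable (X ε x))
    (a : ℝ → ℝ) (ha_pos : ∀ ε > 0, 0 < a ε)
    (ha : Tendsto a (𝓝[>] (0:ℝ)) (𝓝 0))
    (I : E0 → E → ℝ≥0∞) (hI : ∀ x, LowerSemicontinuous (I x))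
    (𝒜 : Set (Set E0))
    -- Assumption A: for every A ∈ 𝒜 and s ≥ 0, ⋃_{x ∈ A} Φ_x(s) is precompact
    (hcomp : ∀ A ∈ 𝒜, ∀ s : ℝ, 0 ≤ s →
      IsCompact (closure (⋃ x ∈ A, {φ | I x φ ≤ ENNReal.ofReal s})))
    -- the uniform Laplace principle over 𝒜
    (hULP : ∀ A ∈ 𝒜, ∀ h : E →ᵇ ℝ,
      Tendsto (fun ε => ⨆ x ∈ A,
          EReal.abs (((a ε * Real.log (∫ ω, Real.exp (-(h (X ε x ω)) / a ε) ∂μ) : ℝ) : EReal)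
            + ⨅ φ, (((h φ : ℝ) : EReal) + (I x φ : EReal))))
        (𝓝[>] (0:ℝ)) (𝓝 (0 : ℝ≥0∞))) :
    -- the Freidlin-Wentzell uniform lower bound
    ∀ A ∈ 𝒜, ∀ s₀ > (0:ℝ), ∀ δ > (0:ℝ),
      (0 : EReal) ≤ Filter.liminf (fun ε =>
        ⨅ x ∈ A, ⨅ φ ∈ {ψ | I x ψ ≤ ENNReal.ofReal s₀},
          ((a ε : EReal) * ENNReal.log (μ {ω | dist (X ε x ω) φ < δ})
            + (I x φ : EReal))) (𝓝[>] (0:ℝ)) := by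
  intro A hA s₀ hs₀ δ hδ
  set F : ℝ → EReal := fun ε =>
    ⨅ x ∈ A, ⨅ φ ∈ {ψ | I x ψ ≤ ENNReal.ofReal s₀},
      ((a ε : EReal) * ENNReal.log (μ {ω | dist (X ε x ω) φ < δ})
        + (I x φ : EReal)) with hF
  -- Main step: for every η > 0, eventually F ε ≥ -η.
  suffices H : ∀ η : ℝ, 0 < η → ∀ᶠ ε in 𝓝[>] (0:ℝ), ((-η : ℝ) : EReal) ≤ F ε by
    by_contra hlt
    push_neg at hlt
    obtain ⟨y, hy1, hy2⟩ := EReal.exists_between_coe_real hlt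
    have hy0 : 0 < -y := by
      have : (y : EReal) < ((0:ℝ) : EReal) := by exact_mod_cast hy2
      have : y < 0 := by exact_mod_cast this
      linarith
    have h1 : ((-(-y) : ℝ) : EReal) ≤ liminf F (𝓝[>] (0:ℝ)) :=
      le_liminf_of_le (by isBoundedDefault) (H (-y) hy0)
    rw [neg_neg] at h1
    exact absurd (h1.trans_lt hy1) (lt_irrefl _)
  intro η hη
  -- constants
  set η' : ℝ := min η 1 with hη'def
  have hη'0 : 0 < η' := lt_min hη one_pos
  have hη'1 : η' ≤ 1 := min_le_right _ _
  have hη'η : η' ≤ η := min_le_left _ _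
  set M : ℝ := s₀ + 1 with hMdef
  have hM0 : 0 ≤ M := by positivity
  set r : ℝ := δ / 4 with hrdef
  have hr : 0 < r := by positivity
  -- compactness and the finite net
  have hK : IsCompact (closure (⋃ x ∈ A, {φ | I x φ ≤ ENNReal.ofReal s₀})) :=
    hcomp A hA s₀ hs₀.le
  obtain ⟨T, hTfin, hTcov⟩ :=
    (Metric.totallyBounded_iff.1 hK.totallyBounded) r hr
  -- the eventual conditions
  have hlog2 : (0:ℝ) < Real.log 2 := Real.log_pos one_lt_two
  have hev1 : ∀ᶠ ε in 𝓝[>] (0:ℝ), ε ∈ Set.Ioi (0:ℝ) := eventually_mem_nhdsWithin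
  have hev2 : ∀ᶠ ε in 𝓝[>] (0:ℝ), a ε < η' / (2 * Real.log 2) :=
    ha.eventually (gt_mem_nhds (by positivity))
  have hev3 : ∀ᶠ ε in 𝓝[>] (0:ℝ), ∀ t ∈ T,
      (⨆ x ∈ A, EReal.abs
          (((a ε * Real.log (∫ ω, Real.exp (-((fwBump M r t) (X ε x ω)) / a ε) ∂μ) : ℝ) : EReal)
            + ⨅ φ, ((((fwBump M r t) φ : ℝ) : EReal) + (I x φ : EReal))))
        < ENNReal.ofReal (η' / 2) := by
    refine (eventually_all_finite hTfin).2 fun t _ => ?_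
    exact (hULP A hA (fwBump M r t)).eventually_lt_const
      (by simp [ENNReal.ofReal_pos]; positivity)
  filter_upwards [hev1, hev2, hev3] with ε hε ha2' hsup
  have haε : 0 < a ε := ha_pos ε hε
  have ha2 : a ε * Real.log 2 < η' / 2 := by
    have := mul_lt_mul_of_pos_right ha2' hlog2
    rw [div_mul_eq_mul_div, mul_comm (2:ℝ) (Real.log 2)] at this
    calc a ε * Real.log 2 < η' * Real.log 2 / (Real.log 2 * 2) := this
      _ = η' / 2 := by field_simp
  -- pointwise bound for each x ∈ A and φ in the level set
  rw [hF]
  refine le_iInf₂ fun x hx => le_iInf₂ fun φ hφ => ?_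
  have hφ' : I x φ ≤ ENNReal.ofReal s₀ := hφ
  have hIφtop : I x φ ≠ ⊤ := (hφ'.trans_lt ENNReal.ofReal_lt_top).ne
  set i : ℝ := (I x φ).toReal with hidef
  have hi0 : 0 ≤ i := ENNReal.toReal_nonneg
  have his : i ≤ s₀ := by
    have := ENNReal.toReal_mono ENNReal.ofReal_ne_top hφ'
    rwa [ENNReal.toReal_ofReal hs₀.le] at this
  -- choose the net point
  have hφK : φ ∈ closure (⋃ x ∈ A, {φ | I x φ ≤ ENNReal.ofReal s₀}) :=
    subset_closure (Set.mem_biUnion hx hφ)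
  obtain ⟨t, ht, hφt⟩ := Set.mem_iUnion₂.1 (hTcov hφK)
  have hdist : dist φ t < r := Metric.mem_ball.1 hφt
  set h : E →ᵇ ℝ := fwBump M r t with hhdef
  set f : Ω → ℝ := fun ω => Real.exp (-(h (X ε x ω)) / a ε) with hfdef
  set em : ℝ := Real.exp (-M / a ε) with hemdef
  have hem0 : 0 < em := Real.exp_pos _
  -- measurable / bounds / integrable
  have hfm : Measurable f :=
    Real.measurable_exp.comp (((h.continuous.measurable.comp (hX ε x)).neg).div_const (a ε))
  have hfb : ∀ ω, em ≤ f ω ∧ f ω ≤ 1 := by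
    intro ω
    have h0 : 0 ≤ h (X ε x ω) := fwBump_nonneg hM0 r t _
    have hM' : h (X ε x ω) ≤ M := fwBump_le hM0 r t _
    constructor
    · exact Real.exp_le_exp.2 (div_le_div_of_nonneg_right (by linarith) haε.le)
    · rw [hfdef]; simp only []
      apply Real.exp_le_one_iff.2
      apply div_nonpos_of_nonpos_of_nonneg (by linarith) haε.le
  have hfint : Integrable f μ :=
    (integrable_const (1:ℝ)).mono' hfm.aestronglyMeasurable
      (ae_of_all μ fun ω => by
        rw [Real.norm_eq_abs, abs_of_pos (Real.exp_pos _)]; exact (hfb ω).2)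
  -- integral lower bound
  have hintc : ∫ (_ : Ω), em ∂μ = em := by simp
  have hle1 : em ≤ ∫ ω, f ω ∂μ := by
    rw [← hintc]
    exact integral_mono (integrable_const em) hfint fun ω => (hfb ω).1
  have hfpos : 0 < ∫ ω, f ω ∂μ := lt_of_lt_of_le hem0 hle1
  -- integral upper bound
  set S : Set Ω := X ε x ⁻¹' Metric.ball t (δ / 2) with hSdef
  have hSmeas : MeasurableSet S := (hX ε x) measurableSet_ball
  have hfg : ∀ ω, f ω ≤ S.indicator (fun _ => (1:ℝ)) ω + em := by
    intro ω
    by_cases hω : ω ∈ S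
    · rw [Set.indicator_of_mem hω]
      linarith [(hfb ω).2, hem0]
    · rw [Set.indicator_of_notMem hω]
      have hfar : 2 * r ≤ dist (X ε x ω) t := by
        have : ¬ dist (X ε x ω) t < δ / 2 := fun hc => hω (Metric.mem_ball.2 hc)
        rw [hrdef]; linarith [not_lt.1 this]
      have : h (X ε x ω) = M := fwBump_eq_of_far M hr hfar
      rw [hfdef]; simp only [this]
      rw [hemdef]; linarith [le_refl (Real.exp (-M / a ε))]
  have hIle : ∫ ω, f ω ∂μ ≤ (μ S).toReal + em := by
    have hgint : Integrable (fun ω => S.indicator (fun _ => (1:ℝ)) ω + em) μ :=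
      ((integrable_const (1:ℝ)).indicator hSmeas).add (integrable_const em)
    calc ∫ ω, f ω ∂μ ≤ ∫ ω, (S.indicator (fun _ => (1:ℝ)) ω + em) ∂μ :=
          integral_mono hfint hgint hfg
      _ = (μ S).toReal + em := by
          rw [integral_add ((integrable_const (1:ℝ)).indicator hSmeas) (integrable_const em),
            integral_indicator_const (1:ℝ) hSmeas]
          simp
          rfl
  -- extract the ULP bound
  set L : ℝ := a ε * Real.log (∫ ω, Real.exp (-(h (X ε x ω)) / a ε) ∂μ) with hLdef
  set J : EReal := ⨅ φ', (((h φ' : ℝ) : EReal) + (I x φ' : EReal)) with hJdef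
  have habs : EReal.abs (((L : ℝ) : EReal) + J) < ENNReal.ofReal (η' / 2) := by
    refine lt_of_le_of_lt ?_ (hsup t ht)
    exact le_iSup₂ (f := fun x' (_ : x' ∈ A) => EReal.abs
      (((a ε * Real.log (∫ ω, Real.exp (-(h (X ε x' ω)) / a ε) ∂μ) : ℝ) : EReal)
        + ⨅ φ', (((h φ' : ℝ) : EReal) + (I x' φ' : EReal)))) x hx
  have hJ0 : (0 : EReal) ≤ J :=
    le_iInf fun ψ => add_nonneg (EReal.coe_nonneg.2 (fwBump_nonneg hM0 r t ψ))
      (EReal.coe_ennreal_nonneg _)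
  have hJle : J ≤ (I x φ : EReal) := by
    have h1 := iInf_le (fun φ' => (((h φ' : ℝ) : EReal) + (I x φ' : EReal))) φ
    have h2 : h φ = 0 := fwBump_eq_zero M hr hdist.le
    rwa [h2, EReal.coe_zero, zero_add] at h1
  have hIcoe_ne_top : (I x φ : EReal) ≠ ⊤ :=
    fun hc => hIφtop (EReal.coe_ennreal_eq_top_iff.1 hc)
  have hJtop : J ≠ ⊤ := (hJle.trans_lt (lt_top_iff_ne_top.2 hIcoe_ne_top)).ne
  have hJbot : J ≠ ⊥ := (EReal.bot_lt_zero.trans_le hJ0).ne'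
  set j : ℝ := J.toReal with hjdef
  have hJeq : ((j : ℝ) : EReal) = J := EReal.coe_toReal hJtop hJbot
  have hIcoe : ((i : ℝ) : EReal) = (I x φ : EReal) := by
    rw [hidef, ← ENNReal.ofReal_toReal hIφtop, EReal.coe_ennreal_ofReal,
      max_eq_left ENNReal.toReal_nonneg, ENNReal.toReal_ofReal ENNReal.toReal_nonneg]
  have hji : j ≤ i := by
    have := EReal.toReal_le_toReal hJle hJbot hIcoe_ne_top
    rwa [EReal.toReal_coe_ennreal] at this
  have habs' : |L + j| < η' / 2 := by
    rw [← hJeq, ← EReal.coe_add, EReal.abs_def] at habs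
    exact (ENNReal.ofReal_lt_ofReal_iff (by positivity)).1
      (lt_of_le_of_lt (ENNReal.ofReal_le_ofReal (le_refl _)) habs)
  have hL : -(η' / 2) - i ≤ L := by
    have := (abs_lt.1 habs').1
    linarith
  -- from here: real computations
  set q : ℝ := (-(η' / 2) - i) / a ε with hqdef
  have hBpos : 0 < (μ S).toReal + em := by positivity
  have hlogB : q ≤ Real.log ((μ S).toReal + em) := by
    have h1 : L ≤ a ε * Real.log ((μ S).toReal + em) := by
      rw [hLdef]
      exact mul_le_mul_of_nonneg_left
        ((Real.log_le_log_iff hfpos hBpos).2 hIle) haε.le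
    have h2 : -(η' / 2) - i ≤ a ε * Real.log ((μ S).toReal + em) := hL.trans h1
    rw [hqdef, div_le_iff₀ haε]
    linarith [h2, mul_comm (a ε) (Real.log ((μ S).toReal + em))]
  have hBexp : Real.exp q ≤ (μ S).toReal + em := by
    calc Real.exp q ≤ Real.exp (Real.log ((μ S).toReal + em)) := Real.exp_le_exp.2 hlogB
      _ = (μ S).toReal + em := Real.exp_log hBpos
  have hemq : em ≤ (1/2) * Real.exp q := by
    have hu : -M / a ε - q ≤ -Real.log 2 := by
      have hnum : -M - (-(η' / 2) - i) ≤ -(1/2) := by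
        have : M = s₀ + 1 := hMdef
        linarith
      have heq : -M / a ε - q = (-M - (-(η' / 2) - i)) / a ε := by
        rw [hqdef]; ring
      rw [heq]
      calc (-M - (-(η' / 2) - i)) / a ε ≤ (-(1/2)) / a ε :=
            div_le_div_of_nonneg_right hnum haε.le
        _ ≤ -Real.log 2 := by
            rw [div_le_iff₀ haε]
            nlinarith [ha2, hη'1]
    have : Real.exp (-M / a ε) = Real.exp q * Real.exp (-M / a ε - q) := by
      rw [← Real.exp_add]; ring_nf
    rw [hemdef, this]
    have h3 : Real.exp (-M / a ε - q) ≤ 1/2 := by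
      calc Real.exp (-M / a ε - q) ≤ Real.exp (-Real.log 2) := Real.exp_le_exp.2 hu
        _ = 1/2 := by rw [Real.exp_neg, Real.exp_log two_pos]; norm_num
    calc Real.exp q * Real.exp (-M / a ε - q) ≤ Real.exp q * (1/2) :=
          mul_le_mul_of_nonneg_left h3 (Real.exp_pos q).le
      _ = 1/2 * Real.exp q := by ring
  set c : ℝ := (1/2) * Real.exp q with hcdef
  have hc : 0 < c := by positivity
  have hcS : c ≤ (μ S).toReal := by rw [hcdef]; linarith
  have hmuS : ENNReal.ofReal c ≤ μ S := ENNReal.ofReal_le_of_le_toReal hcS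
  have hsub : S ⊆ {ω | dist (X ε x ω) φ < δ} := by
    intro ω hω
    have h1 : dist (X ε x ω) t < δ / 2 := Metric.mem_ball.1 hω
    have h2 : dist (X ε x ω) φ ≤ dist (X ε x ω) t + dist t φ := dist_triangle _ _ _
    rw [dist_comm t φ] at h2
    simp only [Set.mem_setOf_eq]
    rw [hrdef] at hdist
    linarith
  have hmuT : ENNReal.ofReal c ≤ μ {ω | dist (X ε x ω) φ < δ} :=
    hmuS.trans (measure_mono hsub)
  have hTne0 : μ {ω | dist (X ε x ω) φ < δ} ≠ 0 :=
    ((ENNReal.ofReal_pos.2 hc).trans_le hmuT).ne'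
  have hTnetop : μ {ω | dist (X ε x ω) φ < δ} ≠ ⊤ := measure_ne_top μ _
  have hlogT : ENNReal.log (μ {ω | dist (X ε x ω) φ < δ})
      = ((Real.log (μ {ω | dist (X ε x ω) φ < δ}).toReal : ℝ) : EReal) :=
    ENNReal.log_pos_real hTne0 hTnetop
  rw [hlogT, ← hIcoe, ← EReal.coe_mul, ← EReal.coe_add, EReal.coe_le_coe_iff]
  -- final real computation
  have hcT : c ≤ (μ {ω | dist (X ε x ω) φ < δ}).toReal := by
    have := ENNReal.toReal_mono hTnetop hmuT
    rwa [ENNReal.toReal_ofReal hc.le] at this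
  have hTpos : 0 < (μ {ω | dist (X ε x ω) φ < δ}).toReal := hc.trans_le hcT
  have hlogle : Real.log c ≤ Real.log (μ {ω | dist (X ε x ω) φ < δ}).toReal :=
    (Real.log_le_log_iff hc hTpos).2 hcT
  have hlogc : Real.log c = -Real.log 2 + q := by
    rw [hcdef, Real.log_mul (by norm_num) (Real.exp_pos q).ne', Real.log_exp,
      show (1:ℝ)/2 = 2⁻¹ by norm_num, Real.log_inv]
  have haq : a ε * q = -(η' / 2) - i := by
    rw [hqdef, mul_div_cancel₀ _ haε.ne']
  have hfinal : a ε * Real.log c + i = -(a ε * Real.log 2) - η' / 2 := by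
    rw [hlogc]; rw [mul_add, haq]; ring
  have h5 : a ε * Real.log c ≤ a ε * Real.log (μ {ω | dist (X ε x ω) φ < δ}).toReal :=
    mul_le_mul_of_nonneg_left hlogle haε.le
  linarith
end

section
/- Under Assumption A (precompactness of $\bigcup_{x\in A}\Phi_x(s)$ for each $A\in\mathscr{A}$, $s\ge0$), if $\{X^\epsilon_x\}$ satisfies the uniform Laplace principle over $\mathscr{A}$, then the Freidlin-Wentzell uniform upper bound holds: for all $A\in\mathscr{A}$, $s_0>0$, $\delta>0$, $\limsup_{\epsilon\to 0}\sup_{x\in A}\sup_{s\in[0,s_0]}\big(a(\epsilon)\log\mathbb{P}(\mathrm{dist}(X^\epsilon_x,\Phi_x(s))\ge\delta)+s\big)\le 0$. -/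
open MeasureTheory Filter Topology
open scoped ENNReal NNReal BoundedContinuousFunction

section Aux
variable {E : Type*} [MetricSpace E]

/-- auxiliary test function -/
noncomputable def fwTF (s₀ δ : ℝ) (J : Finset E) (φ : E) : ℝ :=
  if J.Nonempty then s₀ * min 1 (max 0 (2 / δ * (3 * δ / 4 - Metric.infDist φ ↑J)))
  else 0

lemma fwTF_continuous (s₀ δ : ℝ) (J : Finset E) : Continuous (fwTF s₀ δ J) := by
  by_cases h : J.Nonempty
  · have heq : fwTF s₀ δ J = fun φ : E =>
        s₀ * min 1 (max 0 (2 / δ * (3 * δ / 4 - Metric.infDist φ ↑J))) :=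
      funext fun φ => if_pos h
    rw [heq]
    have hc : Continuous fun φ : E => 2 / δ * (3 * δ / 4 - Metric.infDist φ (↑J : Set E)) :=
      continuous_const.mul (continuous_const.sub (Metric.continuous_infDist_pt _))
    exact continuous_const.mul (continuous_const.min (continuous_const.max hc))
  · have heq : fwTF s₀ δ J = fun _ : E => (0:ℝ) := funext fun φ => if_neg h
    rw [heq]; exact continuous_const

lemma fwTF_nonneg {s₀ : ℝ} (hs₀ : 0 ≤ s₀) (δ : ℝ) (J : Finset E) (φ : E) :
    0 ≤ fwTF s₀ δ J φ := by
  unfold fwTF; split_ifs with h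
  · exact mul_nonneg hs₀ (le_min zero_le_one (le_max_left _ _))
  · exact le_refl 0

lemma fwTF_abs_le (s₀ δ : ℝ) (J : Finset E) (φ : E) : |fwTF s₀ δ J φ| ≤ |s₀| := by
  unfold fwTF; split_ifs with h
  · rw [abs_mul]
    have h1 : 0 ≤ min 1 (max 0 (2 / δ * (3 * δ / 4 - Metric.infDist φ ↑J))) :=
      le_min zero_le_one (le_max_left _ _)
    have h2 : min 1 (max 0 (2 / δ * (3 * δ / 4 - Metric.infDist φ ↑J))) ≤ 1 := min_le_left _ _
    calc |s₀| * |min 1 (max 0 (2 / δ * (3 * δ / 4 - Metric.infDist φ ↑J)))|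
        ≤ |s₀| * 1 := by
          apply mul_le_mul_of_nonneg_left _ (abs_nonneg _)
          rw [abs_of_nonneg h1]; exact h2
      _ = |s₀| := mul_one _
  · simp [abs_nonneg]

lemma fwTF_eq_zero {δ : ℝ} (hδ : 0 < δ) (s₀ : ℝ) {J : Finset E} {z : E}
    (h : ∀ y ∈ J, 3 * δ / 4 ≤ dist z y) : fwTF s₀ δ J z = 0 := by
  unfold fwTF; split_ifs with hJ
  · have hJne : (↑J : Set E).Nonempty := by rwa [Finset.coe_nonempty]
    have hd : 3 * δ / 4 ≤ Metric.infDist z ↑J := by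
      by_contra hc
      push_neg at hc
      obtain ⟨y, hy, hy2⟩ := (Metric.infDist_lt_iff hJne).1 hc
      exact absurd hy2 (not_lt.2 (h y (Finset.mem_coe.1 hy)))
    have hle : 2 / δ * (3 * δ / 4 - Metric.infDist z ↑J) ≤ 0 := by
      apply mul_nonpos_of_nonneg_of_nonpos (by positivity)
      linarith
    rw [max_eq_left hle, min_eq_right zero_le_one, mul_zero]
  · rfl

lemma fwTF_eq_s₀ {δ : ℝ} (hδ : 0 < δ) (s₀ : ℝ) {J : Finset E} {φ y : E}
    (hy : y ∈ J) (hd : dist φ y ≤ δ / 4) : fwTF s₀ δ J φ = s₀ := by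
  unfold fwTF
  rw [if_pos ⟨y, hy⟩]
  have hinf : Metric.infDist φ ↑J ≤ δ / 4 :=
    le_trans (Metric.infDist_le_dist_of_mem (Finset.mem_coe.2 hy)) hd
  have h1 : (1 : ℝ) ≤ 2 / δ * (3 * δ / 4 - Metric.infDist φ ↑J) := by
    have h2 : δ / 2 ≤ 3 * δ / 4 - Metric.infDist φ ↑J := by linarith
    calc (1 : ℝ) = 2 / δ * (δ / 2) := by field_simp
      _ ≤ 2 / δ * (3 * δ / 4 - Metric.infDist φ ↑J) :=
          mul_le_mul_of_nonneg_left h2 (by positivity)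
  rw [max_eq_right (le_trans zero_le_one h1), min_eq_left h1, mul_one]

/-- the test function as a bounded continuous function -/
noncomputable def fwBCF (s₀ δ : ℝ) (J : Finset E) : E →ᵇ ℝ :=
  BoundedContinuousFunction.ofNormedAddCommGroup (fwTF s₀ δ J) (fwTF_continuous s₀ δ J)
    |s₀| (fun φ => by rw [Real.norm_eq_abs]; exact fwTF_abs_le s₀ δ J φ)

@[simp] lemma fwBCF_apply (s₀ δ : ℝ) (J : Finset E) (φ : E) :
    fwBCF s₀ δ J φ = fwTF s₀ δ J φ := rfl

end Aux

lemma ereal_le_coe_abs (x : EReal) : x ≤ (x.abs : EReal) := by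
  induction x using EReal.rec with
  | bot => exact bot_le
  | coe y => rw [EReal.coe_abs]; exact EReal.coe_le_coe_iff.2 (le_abs_self y)
  | top => simp [EReal.abs_top]

lemma ereal_le_zero_of_forall (L : EReal) (h : ∀ η : ℝ, 0 < η → L ≤ (η : EReal) + (η : EReal)) :
    L ≤ 0 := by
  by_contra hc
  push_neg at hc
  rcases eq_or_ne L ⊤ with rfl | hne
  · have := h 1 one_pos
    rw [← EReal.coe_add, top_le_iff] at this
    exact EReal.coe_ne_top _ this
  · have hbot : L ≠ ⊥ := fun hb => by simp [hb] at hc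
    have hL : L = (L.toReal : EReal) := (EReal.coe_toReal hne hbot).symm
    have hr : (0 : ℝ) < L.toReal := by
      rw [hL] at hc; exact_mod_cast hc
    have h2 := h (L.toReal / 4) (by linarith)
    rw [← EReal.coe_add, hL, EReal.coe_le_coe_iff] at h2
    simp only [EReal.toReal_coe] at h2
    linarith
lemma fw_chain (M : EReal) (L t s η : ℝ) (G : EReal) (S Tv : ℝ≥0∞)
    (hst : s ≤ t + η) (hGt : (t : EReal) ≤ G)
    (hM : M ≤ (L : EReal)) (habs : EReal.abs ((L : EReal) + G) ≤ S) (hST : S ≤ Tv) :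
    M + (s : EReal) ≤ (η : EReal) + (Tv : EReal) := by
  calc M + (s : EReal)
      ≤ (L : EReal) + (s : EReal) := add_le_add_left hM _
    _ ≤ (L : EReal) + ((t : EReal) + (η : EReal)) := by
        apply add_le_add_right
        rw [← EReal.coe_add]
        exact EReal.coe_le_coe_iff.2 hst
    _ = ((L : EReal) + (t : EReal)) + (η : EReal) := (add_assoc _ _ _).symm
    _ ≤ ((L : EReal) + G) + (η : EReal) := add_le_add_left (add_le_add_right hGt _) _
    _ ≤ ((((L : EReal) + G).abs : ℝ≥0∞) : EReal) + (η : EReal) :=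
        add_le_add_left (ereal_le_coe_abs _) _
    _ ≤ ((Tv : ℝ≥0∞) : EReal) + (η : EReal) := by
        apply add_le_add_left
        exact EReal.coe_ennreal_le_coe_ennreal_iff.2 (habs.trans hST)
    _ = (η : EReal) + (Tv : EReal) := add_comm _ _
/-- Under Assumption A (precompact unions of level sets), the uniform Laplace
principle implies the Freidlin-Wentzell uniform upper bound. -/
theorem ulp_implies_fw_uniform_upper
    {E : Type*} [MetricSpace E] [PolishSpace E] [MeasurableSpace E] [BorelSpace E]
    {E0 : Type*} {Ω : Type*} [MeasurableSpace Ω] (μ : Measure Ω) [IsProbabilityMeasure μ]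
    (X : ℝ → E0 → Ω → E) (hX : ∀ ε x, Measurable (X ε x))
    (a : ℝ → ℝ) (ha_pos : ∀ ε > 0, 0 < a ε)
    (ha : Tendsto a (𝓝[>] (0:ℝ)) (𝓝 0))
    (I : E0 → E → ℝ≥0∞) (hI : ∀ x, LowerSemicontinuous (I x))
    (𝒜 : Set (Set E0))
    -- Assumption A: for every A ∈ 𝒜 and s ≥ 0, ⋃_{x ∈ A} Φ_x(s) is precompact
    (hcomp : ∀ A ∈ 𝒜, ∀ s : ℝ, 0 ≤ s →
      IsCompact (closure (⋃ x ∈ A, {φ | I x φ ≤ ENNReal.ofReal s})))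
    -- the uniform Laplace principle over 𝒜
    (hULP : ∀ A ∈ 𝒜, ∀ h : E →ᵇ ℝ,
      Tendsto (fun ε => ⨆ x ∈ A,
          EReal.abs (((a ε * Real.log (∫ ω, Real.exp (-(h (X ε x ω)) / a ε) ∂μ) : ℝ) : EReal)
            + ⨅ φ, (((h φ : ℝ) : EReal) + (I x φ : EReal))))
        (𝓝[>] (0:ℝ)) (𝓝 (0 : ℝ≥0∞))) :
    -- the Freidlin-Wentzell uniform upper bound
    ∀ A ∈ 𝒜, ∀ s₀ > (0:ℝ), ∀ δ > (0:ℝ),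
      Filter.limsup (fun ε =>
        ⨆ x ∈ A, ⨆ s ∈ Set.Icc (0:ℝ) s₀,
          ((a ε : EReal) * ENNReal.log
              (μ {ω | ENNReal.ofReal δ ≤
                  EMetric.infEdist (X ε x ω) {φ | I x φ ≤ ENNReal.ofReal s}})
            + (s : EReal))) (𝓝[>] (0:ℝ)) ≤ 0 := by
  intro A hA s₀ hs₀ δ hδ
  classical
  have hK : IsCompact (closure (⋃ x ∈ A, {φ | I x φ ≤ ENNReal.ofReal s₀})) :=
    hcomp A hA s₀ hs₀.le
  obtain ⟨Y0, hY0fin, hY0cov⟩ :=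
    Metric.totallyBounded_iff.mp hK.totallyBounded (δ / 4) (by positivity)
  set Y : Finset E := hY0fin.toFinset with hY_def
  apply ereal_le_zero_of_forall
  intro η hη
  -- grid size
  set n : ℕ := max 1 ⌈s₀ / η⌉₊ with hn_def
  have hn0 : 0 < (n : ℝ) := by
    have : 0 < n := lt_of_lt_of_le Nat.one_pos (le_max_left _ _)
    exact_mod_cast this
  have hgrid : s₀ / n ≤ η := by
    have h1 : s₀ / η ≤ (n : ℝ) := by
      refine le_trans (Nat.le_ceil _) ?_
      exact_mod_cast le_max_right 1 ⌈s₀ / η⌉₊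
    rw [div_le_iff₀ hη] at h1
    rw [div_le_iff₀ hn0]
    nlinarith
  -- the finite family of test functions and the error sum
  set T : ℝ → ℝ≥0∞ := fun ε => ∑ J ∈ Y.powerset, ⨆ x ∈ A,
    EReal.abs (((a ε * Real.log (∫ ω, Real.exp (-(fwBCF s₀ δ J (X ε x ω)) / a ε) ∂μ) : ℝ) : EReal)
      + ⨅ φ, (((fwBCF s₀ δ J φ : ℝ) : EReal) + (I x φ : EReal))) with hT_def
  have hT : Tendsto T (𝓝[>] (0:ℝ)) (𝓝 0) := by
    have := tendsto_finset_sum (Y.powerset) (fun J _ => hULP A hA (fwBCF s₀ δ J))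
    simpa [hT_def] using this
  have hev1 : ∀ᶠ ε in 𝓝[>] (0:ℝ), T ε < ENNReal.ofReal η :=
    hT (Iio_mem_nhds (ENNReal.ofReal_pos.2 hη))
  -- the key pointwise bound
  have key : ∀ ε ∈ Set.Ioi (0:ℝ),
      (⨆ x ∈ A, ⨆ s ∈ Set.Icc (0:ℝ) s₀,
        ((a ε : EReal) * ENNReal.log
            (μ {ω | ENNReal.ofReal δ ≤
                EMetric.infEdist (X ε x ω) {φ | I x φ ≤ ENNReal.ofReal s}})
          + (s : EReal))) ≤ (η : EReal) + (T ε : EReal) := by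
    intro ε hε
    have haε : 0 < a ε := ha_pos ε hε
    refine iSup₂_le fun x hx => iSup₂_le fun s hs => ?_
    -- the grid point t below s
    set j : ℕ := ⌊s * n / s₀⌋₊ with hj_def
    set t : ℝ := j * s₀ / n with ht_def
    have ht0 : 0 ≤ t := by positivity
    have hts : t ≤ s := by
      have h1 : (j : ℝ) ≤ s * n / s₀ :=
        Nat.floor_le (div_nonneg (mul_nonneg hs.1 (Nat.cast_nonneg n)) hs₀.le)
      rw [ht_def, div_le_iff₀ hn0]
      rw [le_div_iff₀ hs₀] at h1
      linarith
    have hst : s ≤ t + η := by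
      have h1 : s * n / s₀ < (j : ℝ) + 1 := Nat.lt_floor_add_one _
      rw [div_lt_iff₀ hs₀] at h1
      have h3 : s ≤ ((j : ℝ) * s₀ + s₀) / n := by
        rw [le_div_iff₀ hn0]; nlinarith
      have h4 : ((j : ℝ) * s₀ + s₀) / n = t + s₀ / n := by rw [ht_def]; ring
      rw [h4] at h3
      linarith
    have hts₀ : t ≤ s₀ := hts.trans hs.2
    -- the finite approximation J of the level set Φ_x(t)
    set J : Finset E :=
      Y.filter (fun y => ∃ φ, dist φ y < δ / 4 ∧ I x φ ≤ ENNReal.ofReal t) with hJ_def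
    have hJY : J ∈ Y.powerset := Finset.mem_powerset.2 (Finset.filter_subset _ _)
    have hcov : ∀ φ : E, I x φ ≤ ENNReal.ofReal t → ∃ y ∈ J, dist φ y < δ / 4 := by
      intro φ hφ
      have hφK : φ ∈ closure (⋃ x ∈ A, {φ | I x φ ≤ ENNReal.ofReal s₀}) :=
        subset_closure (Set.mem_biUnion hx
          (show I x φ ≤ ENNReal.ofReal s₀ from hφ.trans (ENNReal.ofReal_le_ofReal hts₀)))
      obtain ⟨y, hy0, hyb⟩ := Set.mem_iUnion₂.mp (hY0cov hφK)
      have hdist : dist φ y < δ / 4 := Metric.mem_ball.1 hyb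
      exact ⟨y, Finset.mem_filter.2 ⟨hY0fin.mem_toFinset.2 hy0, ⟨φ, hdist, hφ⟩⟩, hdist⟩
    have htop : ∀ φ : E, I x φ ≤ ENNReal.ofReal t → fwTF s₀ δ J φ = s₀ := by
      intro φ hφ
      obtain ⟨y, hyJ, hd⟩ := hcov φ hφ
      exact fwTF_eq_s₀ hδ s₀ hyJ hd.le
    have hzero : ∀ z : E,
        ENNReal.ofReal δ ≤ EMetric.infEdist z {φ | I x φ ≤ ENNReal.ofReal t} →
        fwTF s₀ δ J z = 0 := by
      intro z hz
      apply fwTF_eq_zero hδ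
      intro y hy
      obtain ⟨w, hw, hwI⟩ := (Finset.mem_filter.1 hy).2
      have h1 : ENNReal.ofReal δ ≤ edist z w :=
        hz.trans (EMetric.infEdist_le_edist_of_mem hwI)
      have h2 : δ ≤ dist z w := by
        rw [edist_dist] at h1
        exact (ENNReal.ofReal_le_ofReal_iff dist_nonneg).1 h1
      have h3 := dist_triangle z y w
      have h4 : dist y w = dist w y := dist_comm y w
      linarith
    -- the infimum bound
    have hGt : (t : EReal) ≤
        ⨅ φ, (((fwBCF s₀ δ J φ : ℝ) : EReal) + (I x φ : EReal)) := by
      refine le_iInf fun φ => ?_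
      by_cases hφ : I x φ ≤ ENNReal.ofReal t
      · have : (fwBCF s₀ δ J φ : ℝ) = s₀ := htop φ hφ
        rw [this]
        calc (t : EReal) ≤ (s₀ : EReal) := EReal.coe_le_coe_iff.2 hts₀
          _ ≤ _ := le_add_of_nonneg_right (EReal.coe_ennreal_nonneg _)
      · push_neg at hφ
        calc (t : EReal) ≤ ((ENNReal.ofReal t : ℝ≥0∞) : EReal) := by
              rw [EReal.coe_ennreal_ofReal]; exact le_max_left (t : EReal) 0
          _ ≤ ((I x φ : ℝ≥0∞) : EReal) := EReal.coe_ennreal_le_coe_ennreal_iff.2 hφ.le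
          _ ≤ _ := le_add_of_nonneg_left (by
              exact_mod_cast fwTF_nonneg hs₀.le δ J φ)
    -- measurability and integrability
    have hFt_meas : MeasurableSet {ω | ENNReal.ofReal δ ≤
        EMetric.infEdist (X ε x ω) {φ | I x φ ≤ ENNReal.ofReal t}} := by
      have hm : Measurable fun ω =>
          EMetric.infEdist (X ε x ω) {φ | I x φ ≤ ENNReal.ofReal t} :=
        EMetric.continuous_infEdist.measurable.comp (hX ε x)
      exact hm measurableSet_Ici
    have hint : Integrable (fun ω => Real.exp (-(fwBCF s₀ δ J (X ε x ω)) / a ε)) μ := by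
      have hm : AEStronglyMeasurable
          (fun ω => Real.exp (-(fwBCF s₀ δ J (X ε x ω)) / a ε)) μ := by
        apply Measurable.aestronglyMeasurable
        exact Real.measurable_exp.comp
          (((fwBCF s₀ δ J).continuous.measurable.comp (hX ε x)).neg.div_const _)
      refine (integrable_const (1:ℝ)).mono' hm (ae_of_all _ fun ω => ?_)
      rw [Real.norm_eq_abs, abs_of_pos (Real.exp_pos _)]
      have h0 : 0 ≤ (fwBCF s₀ δ J (X ε x ω) : ℝ) := fwTF_nonneg hs₀.le δ J _
      have h1 : -(fwBCF s₀ δ J (X ε x ω) : ℝ) / a ε ≤ 0 :=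
        div_nonpos_of_nonpos_of_nonneg (neg_nonpos.2 h0) haε.le
      exact Real.exp_le_one_iff.2 h1
    -- the measure-integral comparison
    have hμR : (μ {ω | ENNReal.ofReal δ ≤
        EMetric.infEdist (X ε x ω) {φ | I x φ ≤ ENNReal.ofReal t}}).toReal ≤
        ∫ ω, Real.exp (-(fwBCF s₀ δ J (X ε x ω)) / a ε) ∂μ := by
      rw [← Measure.real_def, ← MeasureTheory.integral_indicator_one hFt_meas]
      refine integral_mono ((integrable_const (1:ℝ)).indicator hFt_meas) hint fun ω => ?_
      by_cases hω : ω ∈ {ω | ENNReal.ofReal δ ≤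
          EMetric.infEdist (X ε x ω) {φ | I x φ ≤ ENNReal.ofReal t}}
      · have hz : fwTF s₀ δ J (X ε x ω) = 0 := hzero (X ε x ω) hω
        have hz' : (fwBCF s₀ δ J (X ε x ω) : ℝ) = 0 := hz
        simp [Set.indicator_of_mem hω, hz']
      · rw [Set.indicator_of_notMem hω]
        exact (Real.exp_pos _).le
    -- the set inclusion
    have hμμ : μ {ω | ENNReal.ofReal δ ≤
          EMetric.infEdist (X ε x ω) {φ | I x φ ≤ ENNReal.ofReal s}} ≤
        μ {ω | ENNReal.ofReal δ ≤
          EMetric.infEdist (X ε x ω) {φ | I x φ ≤ ENNReal.ofReal t}} := by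
      refine measure_mono fun ω hω => ?_
      refine le_trans hω (EMetric.infEdist_anti fun φ hφ => ?_)
      exact le_trans hφ (ENNReal.ofReal_le_ofReal hts)
    -- step 1: the log bound
    have step1 : (a ε : EReal) * ENNReal.log
        (μ {ω | ENNReal.ofReal δ ≤
          EMetric.infEdist (X ε x ω) {φ | I x φ ≤ ENNReal.ofReal s}}) ≤
        ((a ε * Real.log (∫ ω, Real.exp (-(fwBCF s₀ δ J (X ε x ω)) / a ε) ∂μ) : ℝ) : EReal) := by
      rcases eq_or_ne (μ {ω | ENNReal.ofReal δ ≤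
          EMetric.infEdist (X ε x ω) {φ | I x φ ≤ ENNReal.ofReal s}}) 0 with h0 | h0
      · rw [h0, ENNReal.log_zero, EReal.coe_mul_bot_of_pos haε]
        exact bot_le
      · have hFs_pos : 0 < (μ {ω | ENNReal.ofReal δ ≤
            EMetric.infEdist (X ε x ω) {φ | I x φ ≤ ENNReal.ofReal s}}).toReal :=
          ENNReal.toReal_pos h0 (measure_ne_top μ _)
        have hFsFt : (μ {ω | ENNReal.ofReal δ ≤
            EMetric.infEdist (X ε x ω) {φ | I x φ ≤ ENNReal.ofReal s}}).toReal ≤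
            (μ {ω | ENNReal.ofReal δ ≤
              EMetric.infEdist (X ε x ω) {φ | I x φ ≤ ENNReal.ofReal t}}).toReal :=
          ENNReal.toReal_mono (measure_ne_top μ _) hμμ
        rw [ENNReal.log_pos_real' hFs_pos, ← EReal.coe_mul]
        exact EReal.coe_le_coe_iff.2 (mul_le_mul_of_nonneg_left
          (Real.log_le_log hFs_pos (hFsFt.trans hμR)) haε.le)
    -- step 2: the abs bound from the Laplace principle
    have habs : EReal.abs
        (((a ε * Real.log (∫ ω, Real.exp (-(fwBCF s₀ δ J (X ε x ω)) / a ε) ∂μ) : ℝ) : EReal)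
          + ⨅ φ, (((fwBCF s₀ δ J φ : ℝ) : EReal) + (I x φ : EReal))) ≤ T ε := by
      refine le_trans ?_ (Finset.single_le_sum
        (f := fun J => ⨆ x ∈ A, EReal.abs
          (((a ε * Real.log (∫ ω, Real.exp (-(fwBCF s₀ δ J (X ε x ω)) / a ε) ∂μ) : ℝ) : EReal)
            + ⨅ φ, (((fwBCF s₀ δ J φ : ℝ) : EReal) + (I x φ : EReal))))
        (fun i _ => zero_le) hJY)
      exact le_iSup₂ (f := fun x' (_ : x' ∈ A) => EReal.abs
        (((a ε * Real.log (∫ ω, Real.exp (-(fwBCF s₀ δ J (X ε x' ω)) / a ε) ∂μ) : ℝ) : EReal)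
          + ⨅ φ, (((fwBCF s₀ δ J φ : ℝ) : EReal) + (I x' φ : EReal)))) x hx
    exact fw_chain _ _ _ _ _ _ _ _ hst hGt step1 habs le_rfl
  -- conclude via the limsup
  have hev : ∀ᶠ ε in 𝓝[>] (0:ℝ),
      (⨆ x ∈ A, ⨆ s ∈ Set.Icc (0:ℝ) s₀,
        ((a ε : EReal) * ENNReal.log
            (μ {ω | ENNReal.ofReal δ ≤
                EMetric.infEdist (X ε x ω) {φ | I x φ ≤ ENNReal.ofReal s}})
          + (s : EReal))) ≤ (η : EReal) + (η : EReal) := by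
    filter_upwards [eventually_mem_nhdsWithin, hev1] with ε h1 h2
    refine le_trans (key ε h1) ?_
    apply add_le_add_right
    calc ((T ε : ℝ≥0∞) : EReal) ≤ ((ENNReal.ofReal η : ℝ≥0∞) : EReal) :=
          EReal.coe_ennreal_le_coe_ennreal_iff.2 h2.le
      _ = (η : EReal) := by
          rw [EReal.coe_ennreal_ofReal, max_eq_left hη.le]
  exact Filter.limsup_le_of_le (h := hev)
end

section
/- The Freidlin-Wentzell uniform large deviations principle implies the equicontinuous uniform Laplace principle lower bound, with no extra assumptions: for any $A\in\mathscr{A}$ and any equibounded, equicontinuous family $L$ of continuous functions $h:\mathcal{E}\to\mathbb{R}$, $\liminf_{\epsilon\to 0}\inf_{x\in A}\inf_{h\in L}\big(a(\epsilon)\log\mathbb{E}\exp(-h(X^\epsilon_x)/a(\epsilon)) + \inf_{\varphi\in\mathcal{E}}\{h(\varphi)+I_x(\varphi)\}\big)\ge 0$. -/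
open MeasureTheory Filter Topology
open scoped ENNReal NNReal BoundedContinuousFunction

/-- With no extra assumptions, the Freidlin-Wentzell uniform large deviations principle
implies the equicontinuous uniform Laplace principle lower bound. -/
theorem fwuldp_implies_eulp_lower
    {E : Type*} [MetricSpace E] [PolishSpace E] [MeasurableSpace E] [BorelSpace E]
    {E0 : Type*} {Ω : Type*} [MeasurableSpace Ω] (μ : Measure Ω) [IsProbabilityMeasure μ]
    (X : ℝ → E0 → Ω → E) (hX : ∀ ε x, Measurable (X ε x))
    (a : ℝ → ℝ) (ha_pos : ∀ ε > 0, 0 < a ε)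
    (ha : Tendsto a (𝓝[>] (0:ℝ)) (𝓝 0))
    (I : E0 → E → ℝ≥0∞) (hI : ∀ x, LowerSemicontinuous (I x))
    (hinf : ∀ x : E0, (⨅ φ, I x φ) = 0)
    (𝒜 : Set (Set E0))
    -- FWULDP lower bound over 𝒜
    (hFWlow : ∀ A ∈ 𝒜, ∀ s₀ > (0:ℝ), ∀ δ > (0:ℝ),
      (0 : EReal) ≤ Filter.liminf (fun ε =>
        ⨅ x ∈ A, ⨅ φ ∈ {ψ | I x ψ ≤ ENNReal.ofReal s₀},
          ((a ε : EReal) * ENNReal.log (μ {ω | dist (X ε x ω) φ < δ})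
            + (I x φ : EReal))) (𝓝[>] (0:ℝ)))
    -- FWULDP upper bound over 𝒜
    (hFWup : ∀ A ∈ 𝒜, ∀ s₀ > (0:ℝ), ∀ δ > (0:ℝ),
      Filter.limsup (fun ε =>
        ⨆ x ∈ A, ⨆ s ∈ Set.Icc (0:ℝ) s₀,
          ((a ε : EReal) * ENNReal.log
              (μ {ω | ENNReal.ofReal δ ≤
                  EMetric.infEdist (X ε x ω) {φ | I x φ ≤ ENNReal.ofReal s}})
            + (s : EReal))) (𝓝[>] (0:ℝ)) ≤ 0) :
    -- the EULP lower bound: L is any equibounded, equicontinuous family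
    ∀ A ∈ 𝒜, ∀ L : Set (E →ᵇ ℝ),
      (∃ M : ℝ, ∀ h ∈ L, ‖h‖ ≤ M) →
      (∀ η > (0:ℝ), ∃ δ > (0:ℝ), ∀ h ∈ L, ∀ φ ψ : E, dist φ ψ < δ → |h φ - h ψ| < η) →
      (0 : EReal) ≤ Filter.liminf (fun ε =>
        ⨅ x ∈ A, ⨅ h ∈ L,
          (((a ε * Real.log (∫ ω, Real.exp (-(h (X ε x ω)) / a ε) ∂μ) : ℝ) : EReal)
            + ⨅ φ, (((h φ : ℝ) : EReal) + (I x φ : EReal)))) (𝓝[>] (0:ℝ)) := by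
  intro A hA L hL hEq
  obtain ⟨M₀, hM₀⟩ := hL
  set M : ℝ := max M₀ 0 with hMdef
  have hMnonneg : 0 ≤ M := le_max_right _ _
  have hM : ∀ h ∈ L, ∀ y : E, |h y| ≤ M := by
    intro h hh y
    calc |h y| = ‖h y‖ := (Real.norm_eq_abs _).symm
    _ ≤ ‖h‖ := BoundedContinuousFunction.norm_coe_le_norm h y
    _ ≤ M₀ := hM₀ h hh
    _ ≤ M := le_max_left _ _
  -- main claim: for every η > 0, -(2η) ≤ liminf
  have key : ∀ η : ℝ, 0 < η → ((-(2*η) : ℝ) : EReal) ≤ Filter.liminf (fun ε =>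
        ⨅ x ∈ A, ⨅ h ∈ L,
          (((a ε * Real.log (∫ ω, Real.exp (-(h (X ε x ω)) / a ε) ∂μ) : ℝ) : EReal)
            + ⨅ φ, (((h φ : ℝ) : EReal) + (I x φ : EReal)))) (𝓝[>] (0:ℝ)) := by
    intro η hη
    obtain ⟨δ, hδpos, hδ⟩ := hEq η hη
    set s₀ : ℝ := 2*M + 2*η + 1 with hs₀def
    have hs₀pos : 0 < s₀ := by positivity
    have h0 := hFWlow A hA s₀ hs₀pos δ hδpos
    set g : ℝ → EReal := fun ε =>
        ⨅ x ∈ A, ⨅ φ ∈ {ψ | I x ψ ≤ ENNReal.ofReal s₀},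
          ((a ε : EReal) * ENNReal.log (μ {ω | dist (X ε x ω) φ < δ})
            + (I x φ : EReal)) with hgdef
    set c : EReal := ((-(2*η) : ℝ) : EReal) with hcdef
    have key2 : ∀ᶠ ε in 𝓝[>] (0:ℝ), g ε + c ≤
        ⨅ x ∈ A, ⨅ h ∈ L,
          (((a ε * Real.log (∫ ω, Real.exp (-(h (X ε x ω)) / a ε) ∂μ) : ℝ) : EReal)
            + ⨅ φ, (((h φ : ℝ) : EReal) + (I x φ : EReal))) := by
      filter_upwards [self_mem_nhdsWithin] with ε hε
      have haε : 0 < a ε := ha_pos ε hε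
      refine le_iInf₂ fun x hx => le_iInf₂ fun h hh => ?_
      -- the inner infimum J
      set J : EReal := ⨅ φ, (((h φ : ℝ) : EReal) + (I x φ : EReal)) with hJdef
      have hJub : J ≤ ((M + η : ℝ) : EReal) := by
        have : (⨅ φ, I x φ) < ENNReal.ofReal η := by
          rw [hinf x]; exact ENNReal.ofReal_pos.2 hη
        obtain ⟨ψ0, hψ0⟩ := iInf_lt_iff.mp this
        refine le_trans (iInf_le _ ψ0) ?_
        have h1 : ((h ψ0 : ℝ) : EReal) ≤ (M : ℝ) := by
          exact_mod_cast (abs_le.mp (hM h hh ψ0)).2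
        have h2 : ((I x ψ0 : ℝ≥0∞) : EReal) ≤ ((η : ℝ) : EReal) := by
          calc ((I x ψ0 : ℝ≥0∞) : EReal) ≤ ((ENNReal.ofReal η : ℝ≥0∞) : EReal) :=
            EReal.coe_ennreal_le_coe_ennreal_iff.2 hψ0.le
          _ = ((max η 0 : ℝ) : EReal) := EReal.coe_ennreal_ofReal
          _ = ((η : ℝ) : EReal) := by rw [max_eq_left hη.le]
        calc ((h ψ0 : ℝ) : EReal) + (I x ψ0 : EReal) ≤ ((M:ℝ):EReal) + ((η:ℝ):EReal) :=
          add_le_add h1 h2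
        _ = ((M + η : ℝ) : EReal) := by norm_cast
      have hJlb : ((-M : ℝ) : EReal) ≤ J := by
        refine le_iInf fun φ => ?_
        have h1 : ((-M : ℝ) : EReal) ≤ ((h φ : ℝ) : EReal) := by
          exact_mod_cast neg_le_of_abs_le (hM h hh φ)
        calc ((-M : ℝ) : EReal) ≤ ((h φ : ℝ) : EReal) := h1
        _ ≤ ((h φ : ℝ) : EReal) + (I x φ : EReal) :=
          le_add_of_nonneg_right (by exact_mod_cast (zero_le : (0:ℝ≥0∞) ≤ I x φ))
      have hJbot : J ≠ ⊥ := fun hb => by simp [hb] at hJlb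
      have hJtop : J ≠ ⊤ := ne_top_of_le_ne_top (EReal.coe_ne_top _) hJub
      set jr : ℝ := J.toReal with hjrdef
      have hJcoe : ((jr : ℝ) : EReal) = J := EReal.coe_toReal hJtop hJbot
      have hjrub : jr ≤ M + η := by
        rw [← EReal.coe_le_coe_iff]; rw [hJcoe]; exact hJub
      -- choose a near-minimizer φ
      have hlt : J < ((jr + η : ℝ) : EReal) := by
        rw [← hJcoe]; exact_mod_cast lt_add_of_pos_right _ hη
      obtain ⟨φ, hφ⟩ := iInf_lt_iff.mp hlt
      have hIφtop : I x φ ≠ ⊤ := by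
        intro ht
        rw [ht] at hφ
        simp only [EReal.coe_ennreal_top] at hφ
        rw [EReal.add_top_of_ne_bot (EReal.coe_ne_bot _)] at hφ
        exact (not_top_lt hφ)
      set t : ℝ := (I x φ).toReal with htdef
      have ht0 : 0 ≤ t := ENNReal.toReal_nonneg
      have hIφeq : ((I x φ : ℝ≥0∞) : EReal) = ((t : ℝ) : EReal) := by
        conv_lhs => rw [← ENNReal.ofReal_toReal hIφtop]
        rw [EReal.coe_ennreal_ofReal, max_eq_left ht0]
      have hφreal : h φ + t < jr + η := by
        rw [hIφeq] at hφ
        exact_mod_cast hφ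
      have hhφlb : -M ≤ h φ := neg_le_of_abs_le (hM h hh φ)
      have hhφub : h φ ≤ M := (abs_le.mp (hM h hh φ)).2
      -- membership of φ in the sublevel set
      have hφmem : φ ∈ {ψ | I x ψ ≤ ENNReal.ofReal s₀} := by
        have hts₀ : t ≤ s₀ := by
          have : t < jr + η - h φ := by linarith
          have : t < (M + η) + η + M := by linarith
          rw [hs₀def]; linarith
        have : I x φ = ENNReal.ofReal t := (ENNReal.ofReal_toReal hIφtop).symm
        rw [Set.mem_setOf_eq, this]
        exact ENNReal.ofReal_le_ofReal hts₀
      -- bound g ε by the term at (x, φ)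
      have hg : g ε ≤ (a ε : EReal) * ENNReal.log (μ {ω | dist (X ε x ω) φ < δ})
            + (I x φ : EReal) := by
        rw [hgdef]
        exact iInf₂_le_of_le x hx (iInf₂_le φ hφmem)
      refine le_trans (add_le_add hg le_rfl) ?_
      -- core estimate
      set S : Set Ω := {ω | dist (X ε x ω) φ < δ} with hSdef
      have hSmeas : MeasurableSet S := by
        have : S = (X ε x) ⁻¹' (Metric.ball φ δ) := rfl
        rw [this]
        exact (hX ε x) measurableSet_ball
      set Z : ℝ := ∫ ω, Real.exp (-(h (X ε x ω)) / a ε) ∂μ with hZdef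
      -- case on μ S
      rcases eq_or_ne (μ S) 0 with hS0 | hS0
      · rw [hS0, ENNReal.log_zero, EReal.coe_mul_bot_of_pos haε, EReal.bot_add, EReal.bot_add]
        exact bot_le
      · have hSne_top : μ S ≠ ⊤ := measure_ne_top μ S
        have hm_pos : 0 < (μ S).toReal := ENNReal.toReal_pos hS0 hSne_top
        set m : ℝ := (μ S).toReal with hmdef
        have hlogμ : ENNReal.log (μ S) = ((Real.log m : ℝ) : EReal) := by
          rw [ENNReal.log_pos_real hS0 hSne_top]
        -- integral lower bound: Z ≥ exp (-(h φ + η)/a ε) * m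
        have hZlb : Real.exp (-(h φ + η) / a ε) * m ≤ Z := by
          set e0 : ℝ := Real.exp (-(h φ + η) / a ε) with he0def
          have hFmeas : Measurable fun ω => Real.exp (-(h (X ε x ω)) / a ε) :=
            (((h.continuous.measurable.comp (hX ε x)).neg).div_const (a ε)).exp
          have hFbd : ∀ ω, ‖Real.exp (-(h (X ε x ω)) / a ε)‖ ≤ Real.exp (M / a ε) := by
            intro ω
            rw [Real.norm_eq_abs, abs_of_pos (Real.exp_pos _)]
            apply Real.exp_le_exp.2
            apply div_le_div_of_nonneg_right ?_ haε.le
            · linarith [(abs_le.mp (hM h hh (X ε x ω))).1]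
          have hFint : Integrable (fun ω => Real.exp (-(h (X ε x ω)) / a ε)) μ :=
            (integrable_const (Real.exp (M / a ε))).mono'
              hFmeas.aestronglyMeasurable (Filter.Eventually.of_forall hFbd)
          have hGint : Integrable (S.indicator fun _ => e0) μ :=
            (integrable_const e0).indicator hSmeas
          have hpt : ∀ ω, (S.indicator fun _ => e0) ω ≤ Real.exp (-(h (X ε x ω)) / a ε) := by
            intro ω
            by_cases hω : ω ∈ S
            · rw [Set.indicator_of_mem hω]
              apply Real.exp_le_exp.2
              apply div_le_div_of_nonneg_right ?_ haε.le
              · have := hδ h hh (X ε x ω) φ hω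
                have : h (X ε x ω) < h φ + η := by
                  have := abs_lt.mp this
                  linarith [this.2]
                linarith
            · rw [Set.indicator_of_notMem hω]
              exact (Real.exp_pos _).le
          have := MeasureTheory.integral_mono hGint hFint hpt
          rwa [MeasureTheory.integral_indicator_const e0 hSmeas, smul_eq_mul, mul_comm] at this
        -- real logarithmic estimate
        have hZpos : 0 < Z := lt_of_lt_of_le (by positivity) hZlb
        have hlogZ : -(h φ + η) / a ε + Real.log m ≤ Real.log Z := by
          have := Real.log_le_log (by positivity) hZlb
          rwa [Real.log_mul (Real.exp_ne_zero _) hm_pos.ne', Real.log_exp] at this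
        have hreal : a ε * Real.log m + t + -(2*η) ≤ a ε * Real.log Z + jr := by
          have h1 : a ε * (-(h φ + η) / a ε + Real.log m) ≤ a ε * Real.log Z :=
            mul_le_mul_of_nonneg_left hlogZ haε.le
          have h2 : a ε * (-(h φ + η) / a ε + Real.log m)
              = -(h φ + η) + a ε * Real.log m := by
            field_simp <;> ring
          rw [h2] at h1
          nlinarith [hφreal]
        -- transfer to EReal
        rw [hlogμ, hIφeq, hcdef]
        calc (a ε : EReal) * ((Real.log m : ℝ) : EReal) + ((t : ℝ) : EReal)
              + ((-(2*η) : ℝ) : EReal)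
            = ((a ε * Real.log m + t + -(2*η) : ℝ) : EReal) := by
              rw [← EReal.coe_mul]; norm_cast
          _ ≤ ((a ε * Real.log Z + jr : ℝ) : EReal) := by exact_mod_cast hreal
          _ = ((a ε * Real.log Z : ℝ) : EReal) + ((jr : ℝ) : EReal) := by norm_cast
          _ = ((a ε * Real.log Z : ℝ) : EReal) + J := by rw [hJcoe]
    -- combine via liminf
    calc ((-(2*η) : ℝ) : EReal) = 0 + c := by rw [zero_add]
      _ ≤ Filter.liminf g (𝓝[>] (0:ℝ)) + Filter.liminf (fun _ => c) (𝓝[>] (0:ℝ)) := by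
          refine add_le_add h0 ?_
          rw [Filter.liminf_const]
      _ ≤ Filter.liminf (fun ε => g ε + c) (𝓝[>] (0:ℝ)) := EReal.le_liminf_add
      _ ≤ _ := Filter.liminf_le_liminf key2
  -- conclude
  by_contra hcon
  push_neg at hcon
  obtain ⟨r, hr1, hr2⟩ := EReal.exists_between_coe_real hcon
  have hη : 0 < -r/2 := by
    have : r < 0 := by exact_mod_cast hr2
    linarith
  have := key (-r/2) hη
  have hr : ((-(2*(-r/2)) : ℝ) : EReal) = (r : EReal) := by
    have : -(2*(-r/2)) = r := by ring
    rw [this]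
  rw [hr] at this
  exact absurd hr1 (not_lt.2 this)
end

section
/- The equicontinuous uniform Laplace principle implies the Freidlin-Wentzell uniform lower bound, with no extra assumptions: if for any $A\in\mathscr{A}$ and any equibounded, equicontinuous family $L$, $\lim_{\epsilon\to 0}\sup_{x\in A}\sup_{h\in L}|a(\epsilon)\log\mathbb{E}\exp(-h(X^\epsilon_x)/a(\epsilon)) + \inf_\varphi\{h(\varphi)+I_x(\varphi)\}| = 0$, then for all $A\in\mathscr{A}$, $s_0>0$, $\delta>0$, $\liminf_{\epsilon\to 0}\inf_{x\in A}\inf_{\varphi\in\Phi_x(s_0)}\big(a(\epsilon)\log\mathbb{P}(\rho(X^\epsilon_x,\varphi)<\delta)+I_x(\varphi)\big)\ge 0$. -/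
open MeasureTheory Filter Topology
open scoped ENNReal NNReal BoundedContinuousFunction

section aux

private lemma clamp_lip (s t : ℝ) : |max 0 (min s 1) - max 0 (min t 1)| ≤ |s - t| := by
  calc |max 0 (min s 1) - max 0 (min t 1)| ≤ max |(0:ℝ) - 0| |min s 1 - min t 1| :=
        abs_max_sub_max_le_max _ _ _ _
    _ = |min s 1 - min t 1| := by simp
    _ ≤ max |s - t| |(1:ℝ) - 1| := abs_min_sub_min_le_max _ _ _ _
    _ = |s - t| := by simp

variable {E : Type*} [MetricSpace E]

/-- The auxiliary test function `y ↦ M · clamp (dist y φ / δ)`. -/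
noncomputable def testFn (M δ : ℝ) (φ : E) : E →ᵇ ℝ :=
  BoundedContinuousFunction.ofNormedAddCommGroup
    (fun y => M * max 0 (min (dist y φ / δ) 1))
    (continuous_const.mul (continuous_const.max
      (((continuous_id.dist continuous_const).div_const δ).min continuous_const)))
    |M|
    (fun y => by
      rw [Real.norm_eq_abs, abs_mul]
      have h1 : |max 0 (min (dist y φ / δ) 1)| ≤ 1 := by
        rw [abs_of_nonneg (le_max_left _ _)]
        exact max_le zero_le_one (min_le_right _ _)
      nlinarith [abs_nonneg M])

lemma testFn_apply (M δ : ℝ) (φ y : E) :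
    testFn M δ φ y = M * max 0 (min (dist y φ / δ) 1) := rfl

lemma testFn_nonneg {M : ℝ} (hM : 0 ≤ M) (δ : ℝ) (φ y : E) : 0 ≤ testFn M δ φ y :=
  mul_nonneg hM (le_max_left _ _)

lemma testFn_le {M : ℝ} (hM : 0 ≤ M) (δ : ℝ) (φ y : E) : testFn M δ φ y ≤ M := by
  rw [testFn_apply]
  have h1 : max 0 (min (dist y φ / δ) 1) ≤ 1 := max_le zero_le_one (min_le_right _ _)
  nlinarith

lemma testFn_self (M δ : ℝ) (φ : E) : testFn M δ φ φ = 0 := by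
  rw [testFn_apply]
  simp [min_eq_left (zero_le_one (α := ℝ))]

lemma testFn_far {M δ : ℝ} (hδ : 0 < δ) {φ y : E} (hy : δ ≤ dist y φ) :
    testFn M δ φ y = M := by
  rw [testFn_apply]
  have h1 : (1 : ℝ) ≤ dist y φ / δ := (one_le_div hδ).2 hy
  rw [min_eq_right h1, max_eq_right zero_le_one, mul_one]

lemma testFn_lip {M δ : ℝ} (hM : 0 ≤ M) (hδ : 0 < δ) (φ y z : E) :
    |testFn M δ φ y - testFn M δ φ z| ≤ M / δ * dist y z := by
  rw [testFn_apply, testFn_apply, ← mul_sub, abs_mul, abs_of_nonneg hM]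
  have h1 : |max 0 (min (dist y φ / δ) 1) - max 0 (min (dist z φ / δ) 1)|
      ≤ |dist y φ / δ - dist z φ / δ| := clamp_lip _ _
  have h2 : |dist y φ / δ - dist z φ / δ| = |dist y φ - dist z φ| / δ := by
    rw [div_sub_div_same, abs_div, abs_of_pos hδ]
  have h3 : |dist y φ - dist z φ| ≤ dist y z := abs_dist_sub_le _ _ _
  have h4 : |dist y φ / δ - dist z φ / δ| ≤ dist y z / δ := by
    rw [h2]; gcongr
  calc M * |max 0 (min (dist y φ / δ) 1) - max 0 (min (dist z φ / δ) 1)|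
      ≤ M * (dist y z / δ) := mul_le_mul_of_nonneg_left (h1.trans h4) hM
    _ = M / δ * dist y z := by ring

private lemma key_real {aε η s₀ J p : ℝ} (haε : 0 < aε) (hη : 0 < η)
    (hJ0 : 0 ≤ J) (hJ : J ≤ s₀) (h2 : aε * Real.log 2 ≤ η)
    (hp : Real.exp ((-J - η) / aε) - Real.exp (-(s₀ + 2 * η) / aε) ≤ p) :
    0 < p ∧ -(2 * η) ≤ aε * Real.log p + J := by
  have hlog2 : (0:ℝ) < Real.log 2 := Real.log_pos one_lt_two
  have hhalf : Real.exp (-(s₀ + 2 * η) / aε) ≤ Real.exp ((-J - η) / aε) * (1 / 2) := by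
    have he : Real.exp (-(s₀ + 2 * η) / aε)
        = Real.exp ((-J - η) / aε) * Real.exp (-(s₀ - J + η) / aε) := by
      rw [← Real.exp_add]; congr 1; field_simp; ring
    rw [he]
    have hle : -(s₀ - J + η) / aε ≤ -η / aε := by gcongr; linarith
    have h4 : Real.exp (-η / aε) ≤ 1 / 2 := by
      rw [show (1/2 : ℝ) = Real.exp (Real.log (1/2)) from (Real.exp_log (by norm_num)).symm]
      apply Real.exp_le_exp.2
      rw [one_div, Real.log_inv]
      have h5 : Real.log 2 ≤ η / aε := (le_div_iff₀ haε).2 (by linarith)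
      have h6 : -η / aε = -(η / aε) := by ring
      linarith [h6 ▸ neg_le_neg h5]
    exact mul_le_mul_of_nonneg_left ((Real.exp_le_exp.2 hle).trans h4) (Real.exp_pos _).le
  have hge : Real.exp ((-J - η) / aε) * (1 / 2) ≤ p := by
    nlinarith [Real.exp_pos ((-J - η) / aε)]
  have hp0 : 0 < p := lt_of_lt_of_le (by positivity) hge
  refine ⟨hp0, ?_⟩
  have hlog : (-J - η) / aε + Real.log (1 / 2) ≤ Real.log p := by
    have := Real.log_le_log (by positivity) hge
    rwa [Real.log_mul (Real.exp_ne_zero _) (by norm_num), Real.log_exp] at this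
  have hmul := mul_le_mul_of_nonneg_left hlog haε.le
  have hc : aε * ((-J - η) / aε) = -J - η := by field_simp
  rw [mul_add, hc, show Real.log (1/2) = -Real.log 2 by rw [one_div, Real.log_inv]] at hmul
  nlinarith

end aux

/-- With no extra assumptions, the equicontinuous uniform Laplace principle implies
the Freidlin-Wentzell uniform lower bound. -/
theorem eulp_implies_fw_uniform_lower
    {E : Type*} [MetricSpace E] [PolishSpace E] [MeasurableSpace E] [BorelSpace E]
    {E0 : Type*} {Ω : Type*} [MeasurableSpace Ω] (μ : Measure Ω) [IsProbabilityMeasure μ]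
    (X : ℝ → E0 → Ω → E) (hX : ∀ ε x, Measurable (X ε x))
    (a : ℝ → ℝ) (ha_pos : ∀ ε > 0, 0 < a ε)
    (ha : Tendsto a (𝓝[>] (0:ℝ)) (𝓝 0))
    (I : E0 → E → ℝ≥0∞) (hI : ∀ x, LowerSemicontinuous (I x))
    (𝒜 : Set (Set E0))
    -- the equicontinuous uniform Laplace principle over 𝒜
    (hEULP : ∀ A ∈ 𝒜, ∀ L : Set (E →ᵇ ℝ),
      (∃ M : ℝ, ∀ h ∈ L, ‖h‖ ≤ M) →
      (∀ η > (0:ℝ), ∃ δ > (0:ℝ), ∀ h ∈ L, ∀ φ ψ : E, dist φ ψ < δ → |h φ - h ψ| < η) →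
      Tendsto (fun ε => ⨆ x ∈ A, ⨆ h ∈ L,
          EReal.abs (((a ε * Real.log (∫ ω, Real.exp (-(h (X ε x ω)) / a ε) ∂μ) : ℝ) : EReal)
            + ⨅ φ, (((h φ : ℝ) : EReal) + (I x φ : EReal))))
        (𝓝[>] (0:ℝ)) (𝓝 (0 : ℝ≥0∞))) :
    -- the Freidlin-Wentzell uniform lower bound
    ∀ A ∈ 𝒜, ∀ s₀ > (0:ℝ), ∀ δ > (0:ℝ),
      (0 : EReal) ≤ Filter.liminf (fun ε =>
        ⨅ x ∈ A, ⨅ φ ∈ {ψ | I x ψ ≤ ENNReal.ofReal s₀},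
          ((a ε : EReal) * ENNReal.log (μ {ω | dist (X ε x ω) φ < δ})
            + (I x φ : EReal))) (𝓝[>] (0:ℝ)) := by
  intro A hA s₀ hs₀ δ hδ
  by_contra hcon
  rw [not_le] at hcon
  obtain ⟨r, hlr, hr0⟩ := EReal.exists_between_coe_real hcon
  have hr0' : r < 0 := by exact_mod_cast hr0
  set η : ℝ := -r / 2 with hηdef
  have hη : 0 < η := by rw [hηdef]; linarith
  have hlog2 : (0:ℝ) < Real.log 2 := Real.log_pos one_lt_two
  set M : ℝ := s₀ + 2 * η with hMdef
  have hM : 0 < M := by rw [hMdef]; linarith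
  set L : Set (E →ᵇ ℝ) := Set.range (testFn M δ) with hLdef
  have hnorm : ∀ φ : E, ‖testFn M δ φ‖ ≤ |M| := fun φ => by
    rw [BoundedContinuousFunction.norm_le (abs_nonneg M)]
    intro y
    rw [Real.norm_eq_abs, testFn_apply, abs_mul]
    have h1 : |max 0 (min (dist y φ / δ) 1)| ≤ 1 := by
      rw [abs_of_nonneg (le_max_left _ _)]
      exact max_le zero_le_one (min_le_right _ _)
    nlinarith [abs_nonneg M]
  have hL1 : ∃ C : ℝ, ∀ h ∈ L, ‖h‖ ≤ C := ⟨|M|, by rintro h ⟨φ, rfl⟩; exact hnorm φ⟩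
  have hL2 : ∀ η' > (0:ℝ), ∃ δ' > (0:ℝ), ∀ h ∈ L, ∀ y z : E, dist y z < δ' → |h y - h z| < η' := by
    intro η' hη'
    refine ⟨δ * η' / (M + 1), by positivity, ?_⟩
    rintro h ⟨φ, rfl⟩ y z hyz
    have hMδ : 0 < M / δ := by positivity
    calc |testFn M δ φ y - testFn M δ φ z| ≤ M / δ * dist y z := testFn_lip hM.le hδ φ y z
      _ < M / δ * (δ * η' / (M + 1)) := mul_lt_mul_of_pos_left hyz hMδ
      _ = M * η' / (M + 1) := by field_simp
      _ < η' := by rw [div_lt_iff₀ (by positivity)]; nlinarith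
  have htend := hEULP A hA L hL1 hL2
  have E2 : ∀ᶠ ε in 𝓝[>] (0:ℝ), a ε < η / Real.log 2 :=
    ha.eventually_lt_const (div_pos hη hlog2)
  have key : ∀ᶠ ε in 𝓝[>] (0:ℝ), (r : EReal) ≤
      ⨅ x ∈ A, ⨅ φ ∈ {ψ | I x ψ ≤ ENNReal.ofReal s₀},
        ((a ε : EReal) * ENNReal.log (μ {ω | dist (X ε x ω) φ < δ}) + (I x φ : EReal)) := by
    filter_upwards [self_mem_nhdsWithin, E2,
      htend.eventually_lt_const (ENNReal.ofReal_pos.2 hη)] with ε hε h2' hsup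
    have haε : 0 < a ε := ha_pos ε hε
    have h2 : a ε * Real.log 2 ≤ η := ((lt_div_iff₀ hlog2).1 h2').le
    refine le_iInf₂ fun x hx => le_iInf₂ fun φ hφ => ?_
    have hφ' : I x φ ≤ ENNReal.ofReal s₀ := hφ
    set J := (I x φ).toReal with hJdef
    have hIt : I x φ ≠ ⊤ := ne_top_of_le_ne_top ENNReal.ofReal_ne_top hφ'
    have hJ0 : 0 ≤ J := ENNReal.toReal_nonneg
    have hJs : J ≤ s₀ := ENNReal.toReal_le_of_le_ofReal hs₀.le hφ'
    set h : E →ᵇ ℝ := testFn M δ φ with hhdef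
    have hh : h ∈ L := ⟨φ, rfl⟩
    set T := ∫ ω, Real.exp (-(h (X ε x ω)) / a ε) ∂μ with hTdef
    set m := ⨅ ψ, (((h ψ : ℝ) : EReal) + (I x ψ : EReal)) with hmdef
    have habs : EReal.abs (((a ε * Real.log T : ℝ) : EReal) + m) < ENNReal.ofReal η := by
      refine lt_of_le_of_lt (le_trans
        (le_biSup (fun h : E →ᵇ ℝ => EReal.abs
          (((a ε * Real.log (∫ ω, Real.exp (-(h (X ε x ω)) / a ε) ∂μ) : ℝ) : EReal)
            + ⨅ φ, (((h φ : ℝ) : EReal) + (I x φ : EReal)))) hh)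
        (le_biSup (fun x => ⨆ h ∈ L, EReal.abs
          (((a ε * Real.log (∫ ω, Real.exp (-(h (X ε x ω)) / a ε) ∂μ) : ℝ) : EReal)
            + ⨅ φ, (((h φ : ℝ) : EReal) + (I x φ : EReal)))) hx)) hsup
    have hm0 : (0 : EReal) ≤ m :=
      le_iInf fun ψ => add_nonneg (by exact_mod_cast testFn_nonneg hM.le δ φ ψ)
        (EReal.coe_ennreal_nonneg _)
    have hmle : m ≤ (I x φ : EReal) := by
      have h0 := iInf_le (fun ψ => (((h ψ : ℝ) : EReal) + (I x ψ : EReal))) φ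
      rwa [show ((h φ : ℝ) : EReal) = 0 by exact_mod_cast testFn_self M δ φ, zero_add] at h0
    have hmt : m ≠ ⊤ := ne_top_of_le_ne_top (by simp [hIt]) hmle
    have hmb : m ≠ ⊥ := (EReal.bot_lt_zero.trans_le hm0).ne'
    set mr := m.toReal with hmrdef
    have hmr : (mr : EReal) = m := EReal.coe_toReal hmt hmb
    have hIco : (I x φ : EReal) = ((J : ℝ) : EReal) := by
      conv_lhs => rw [← ENNReal.ofReal_toReal hIt]
      rw [EReal.coe_ennreal_ofReal, max_eq_left hJ0]
    have hmr0 : 0 ≤ mr := by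
      have := hm0; rw [← hmr] at this; exact_mod_cast this
    have hmrJ : mr ≤ J := by
      have := hmle; rw [← hmr, hIco] at this; exact_mod_cast this
    have habs' : |a ε * Real.log T + mr| < η := by
      have heq : (((a ε * Real.log T : ℝ) : EReal) + m) = ((a ε * Real.log T + mr : ℝ) : EReal) := by
        rw [← hmr, ← EReal.coe_add]
      rw [heq, EReal.abs_def] at habs
      exact (ENNReal.ofReal_lt_ofReal_iff_of_nonneg (abs_nonneg _)).1 habs
    have hT_lb : -J - η ≤ a ε * Real.log T := by
      have h1 := (abs_lt.1 habs').1
      linarith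
    have hg_meas : Measurable fun ω => Real.exp (-(h (X ε x ω)) / a ε) :=
      (((h.continuous.measurable.comp (hX ε x)).neg).div_const (a ε)).exp
    set S := {ω | dist (X ε x ω) φ < δ} with hSdef
    have hS : MeasurableSet S :=
      measurableSet_lt ((hX ε x).dist measurable_const) measurable_const
    set p := (μ S).toReal with hpdef
    have hexp_le_one : ∀ ω, Real.exp (-(h (X ε x ω)) / a ε) ≤ 1 := fun ω =>
      Real.exp_le_one_iff.2 (div_nonpos_of_nonpos_of_nonneg
        (neg_nonpos.2 (testFn_nonneg hM.le δ φ _)) haε.le)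
    have hg_int : Integrable (fun ω => Real.exp (-(h (X ε x ω)) / a ε)) μ := by
      refine ⟨hg_meas.aestronglyMeasurable,
        HasFiniteIntegral.of_bounded (C := 1) (ae_of_all _ fun ω => ?_)⟩
      rw [Real.norm_eq_abs, abs_of_pos (Real.exp_pos _)]
      exact hexp_le_one ω
    have hub : T ≤ p + Real.exp (-M / a ε) := by
      have hint2 : Integrable (fun ω => S.indicator (1 : Ω → ℝ) ω + Real.exp (-M / a ε)) μ :=
        ((integrable_const (1:ℝ)).indicator hS : Integrable (S.indicator (1 : Ω → ℝ)) μ).add (integrable_const _)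
      have hmono : ∀ ω, Real.exp (-(h (X ε x ω)) / a ε)
          ≤ S.indicator (1 : Ω → ℝ) ω + Real.exp (-M / a ε) := by
        intro ω
        by_cases hω : ω ∈ S
        · rw [Set.indicator_of_mem hω, Pi.one_apply]
          linarith [hexp_le_one ω, Real.exp_pos (-M / a ε)]
        · have hfar : h (X ε x ω) = M := testFn_far hδ (not_lt.1 hω)
          rw [Set.indicator_of_notMem hω, hfar, zero_add]
      calc T ≤ ∫ ω, (S.indicator (1 : Ω → ℝ) ω + Real.exp (-M / a ε)) ∂μ :=
            integral_mono hg_int hint2 hmono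
        _ = p + Real.exp (-M / a ε) := by
            rw [show (∫ ω, S.indicator (1 : Ω → ℝ) ω + Real.exp (-M / a ε) ∂μ)
                = (∫ ω, S.indicator (1 : Ω → ℝ) ω ∂μ) + ∫ _, Real.exp (-M / a ε) ∂μ from
              integral_add ((integrable_const (1:ℝ)).indicator hS) (integrable_const _),
              integral_indicator_one hS, integral_const]
            simp
            rfl
    have hlb : Real.exp (-M / a ε) ≤ T := by
      have hmono : ∀ ω, Real.exp (-M / a ε) ≤ Real.exp (-(h (X ε x ω)) / a ε) := fun ω =>
        Real.exp_le_exp.2 ((div_le_div_iff_of_pos_right haε).2 (neg_le_neg (testFn_le hM.le δ φ _)))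
      calc Real.exp (-M / a ε) = ∫ _, Real.exp (-M / a ε) ∂μ := by simp
        _ ≤ T := integral_mono (integrable_const _) hg_int hmono
    have hT0 : 0 < T := lt_of_lt_of_le (Real.exp_pos _) hlb
    have hTexp : Real.exp ((-J - η) / a ε) ≤ T := by
      have h1 : (-J - η) / a ε ≤ Real.log T := by
        rw [div_le_iff₀ haε]
        nlinarith
      calc Real.exp ((-J - η) / a ε) ≤ Real.exp (Real.log T) := Real.exp_le_exp.2 h1
        _ = T := Real.exp_log hT0
    have hp : Real.exp ((-J - η) / a ε) - Real.exp (-(s₀ + 2 * η) / a ε) ≤ p := by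
      rw [← hMdef]
      linarith
    obtain ⟨hp0, hfinal⟩ := key_real haε hη hJ0 hJs h2 hp
    have hlogS : ENNReal.log (μ S) = ((Real.log p : ℝ) : EReal) := by
      rw [ENNReal.log_pos_real' (hpdef ▸ hp0)]
    rw [hlogS, hIco, ← EReal.coe_mul, ← EReal.coe_add]
    refine EReal.coe_le_coe_iff.2 ?_
    rw [hηdef] at hfinal
    linarith
  have hle : (r : EReal) ≤ Filter.liminf (fun ε =>
      ⨅ x ∈ A, ⨅ φ ∈ {ψ | I x ψ ≤ ENNReal.ofReal s₀},
        ((a ε : EReal) * ENNReal.log (μ {ω | dist (X ε x ω) φ < δ})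
          + (I x φ : EReal))) (𝓝[>] (0:ℝ)) :=
    Filter.le_liminf_of_le (by isBoundedDefault) key
  exact absurd hle (not_le.2 hlr)
end

section
/- Under Assumption B (($\mathcal{E}_0,\rho_0$) Polish, $\mathscr{A}$ the compact subsets of $\mathcal{E}_0$, each $I_x$ a good rate function, and $x_n\to x$ implies $\lambda(\Phi_{x_n}(s),\Phi_x(s))\to 0$ in Hausdorff metric for each $s\ge 0$), if $\{X^\epsilon_x\}$ satisfies the FWULDP over $\mathscr{A}$, then the Dembo-Zeitouni uniform upper bound holds: for every compact $A\subset\mathcal{E}_0$ and closed $F\subset\mathcal{E}$, $\limsup_{\epsilon\to 0}\sup_{x\in A} a(\epsilon)\log\mathbb{P}(X^\epsilon_x\in F) \le -\inf_{x\in A}\inf_{\varphi\in F} I_x(\varphi)$. -/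
open MeasureTheory Filter Topology
open scoped ENNReal NNReal

/-- Separation lemma: under compactness of level sets and Hausdorff continuity,
if the level set at `s` is uniformly bounded away from `F` pointwise over `A`,
then there is a uniform positive distance `δ`. -/
lemma fwuldp_sep_lemma {E : Type*} [MetricSpace E]
    {E0 : Type*} [MetricSpace E0]
    (I : E0 → E → ℝ≥0∞)
    (hgood : ∀ x : E0, ∀ s : ℝ, IsCompact {φ | I x φ ≤ ENNReal.ofReal s})
    (hHaus : ∀ s : ℝ, 0 ≤ s → ∀ (x : ℕ → E0) (x₀ : E0), Tendsto x atTop (𝓝 x₀) →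
      Tendsto (fun n => EMetric.hausdorffEdist
          {φ | I (x n) φ ≤ ENNReal.ofReal s} {φ | I x₀ φ ≤ ENNReal.ofReal s})
        atTop (𝓝 (0 : ℝ≥0∞)))
    (A : Set E0) (hA : IsCompact A) (F : Set E) (hF : IsClosed F)
    (s : ℝ) (hs : 0 < s)
    (hgap : ∀ x ∈ A, ∀ φ ∈ F, ENNReal.ofReal s < I x φ) :
    ∃ δ > (0:ℝ), ∀ x ∈ A, ∀ φ ∈ F,
      ENNReal.ofReal δ ≤ EMetric.infEdist φ {ψ | I x ψ ≤ ENNReal.ofReal s} := by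
  by_contra hcon
  push_neg at hcon
  choose xs hxs φs hφs hlt using fun n : ℕ =>
    hcon (1/(n+1)) (by positivity)
  obtain ⟨x₀, hx₀, k, hk, hxk⟩ := hA.tendsto_subseq hxs
  set Φ : E0 → Set E := fun x => {ψ | I x ψ ≤ ENNReal.ofReal s} with hΦ
  set c : ℝ≥0∞ := ⨅ ψ ∈ Φ x₀, EMetric.infEdist ψ F with hc
  have hcpos : 0 < c := by
    rcases (Φ x₀).eq_empty_or_nonempty with he | hne
    · rw [hc, he]; simp
    · obtain ⟨ψ₀, hψ₀, hmin⟩ :=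
        (hgood x₀ s).exists_isMinOn hne EMetric.continuous_infEdist.continuousOn
      have h1 : 0 < EMetric.infEdist ψ₀ F := by
        refine EMetric.infEdist_pos_iff_notMem_closure.2 ?_
        rw [hF.closure_eq]
        intro hmem
        exact absurd hψ₀ (not_le.2 (hgap x₀ hx₀ ψ₀ hmem))
      refine h1.trans_le (le_iInf₂ fun ψ hψ => hmin hψ)
  have hcle : ∀ n, c ≤ ENNReal.ofReal (1/((k n : ℝ)+1)) +
      EMetric.hausdorffEdist (Φ (xs (k n))) (Φ x₀) := by
    intro n
    have h1 : c ≤ EMetric.infEdist (φs (k n)) (Φ x₀) := by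
      refine EMetric.le_infEdist.2 ?_
      intro ψ hψ
      calc c ≤ EMetric.infEdist ψ F := iInf₂_le ψ hψ
        _ ≤ edist ψ (φs (k n)) := EMetric.infEdist_le_edist_of_mem (hφs (k n))
        _ = edist (φs (k n)) ψ := edist_comm _ _
    calc c ≤ EMetric.infEdist (φs (k n)) (Φ x₀) := h1
      _ ≤ EMetric.infEdist (φs (k n)) (Φ (xs (k n))) +
          EMetric.hausdorffEdist (Φ (xs (k n))) (Φ x₀) :=
            EMetric.infEdist_le_infEdist_add_hausdorffEdist
      _ ≤ _ := by
          gcongr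
          exact (hlt (k n)).le
  have htend : Tendsto (fun n => ENNReal.ofReal (1/((k n : ℝ)+1)) +
      EMetric.hausdorffEdist (Φ (xs (k n))) (Φ x₀)) atTop (𝓝 0) := by
    have t1 : Tendsto (fun n => ENNReal.ofReal (1/((k n : ℝ)+1))) atTop (𝓝 0) := by
      rw [← ENNReal.ofReal_zero]
      apply (ENNReal.continuous_ofReal.tendsto 0).comp
      exact (tendsto_one_div_add_atTop_nhds_zero_nat).comp hk.tendsto_atTop
    have t2 := hHaus s hs.le (fun n => xs (k n)) x₀ hxk
    simpa using t1.add t2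
  exact absurd (ge_of_tendsto' htend hcle) hcpos.not_ge


/-- Under Assumption B (E₀ Polish, 𝒜 the compact subsets, each Iₓ a good rate function,
and level sets continuous in the Hausdorff metric), the FWULDP over compact sets implies
the Dembo-Zeitouni uniform upper bound. -/
theorem fwuldp_implies_dz_uniform_upper
    {E : Type*} [MetricSpace E] [PolishSpace E] [MeasurableSpace E] [BorelSpace E]
    {E0 : Type*} [MetricSpace E0] [PolishSpace E0]
    {Ω : Type*} [MeasurableSpace Ω] (μ : Measure Ω) [IsProbabilityMeasure μ]
    (X : ℝ → E0 → Ω → E) (hX : ∀ ε x, Measurable (X ε x))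
    (a : ℝ → ℝ) (ha_pos : ∀ ε > 0, 0 < a ε)
    (ha : Tendsto a (𝓝[>] (0:ℝ)) (𝓝 0))
    (I : E0 → E → ℝ≥0∞) (hI : ∀ x, LowerSemicontinuous (I x))
    -- each I x is a good rate function
    (hgood : ∀ x : E0, ∀ s : ℝ, IsCompact {φ | I x φ ≤ ENNReal.ofReal s})
    -- level sets are continuous in the Hausdorff metric
    (hHaus : ∀ s : ℝ, 0 ≤ s → ∀ (x : ℕ → E0) (x₀ : E0), Tendsto x atTop (𝓝 x₀) →
      Tendsto (fun n => EMetric.hausdorffEdist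
          {φ | I (x n) φ ≤ ENNReal.ofReal s} {φ | I x₀ φ ≤ ENNReal.ofReal s})
        atTop (𝓝 (0 : ℝ≥0∞)))
    -- FWULDP lower bound over compact subsets of E0
    (hFWlow : ∀ A : Set E0, IsCompact A → ∀ s₀ > (0:ℝ), ∀ δ > (0:ℝ),
      (0 : EReal) ≤ Filter.liminf (fun ε =>
        ⨅ x ∈ A, ⨅ φ ∈ {ψ | I x ψ ≤ ENNReal.ofReal s₀},
          ((a ε : EReal) * ENNReal.log (μ {ω | dist (X ε x ω) φ < δ})
            + (I x φ : EReal))) (𝓝[>] (0:ℝ)))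
    -- FWULDP upper bound over compact subsets of E0
    (hFWup : ∀ A : Set E0, IsCompact A → ∀ s₀ > (0:ℝ), ∀ δ > (0:ℝ),
      Filter.limsup (fun ε =>
        ⨆ x ∈ A, ⨆ s ∈ Set.Icc (0:ℝ) s₀,
          ((a ε : EReal) * ENNReal.log
              (μ {ω | ENNReal.ofReal δ ≤
                  EMetric.infEdist (X ε x ω) {φ | I x φ ≤ ENNReal.ofReal s}})
            + (s : EReal))) (𝓝[>] (0:ℝ)) ≤ 0) :
    -- Dembo-Zeitouni uniform upper bound
    ∀ A : Set E0, IsCompact A → ∀ F : Set E, IsClosed F →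
      Filter.limsup (fun ε => ⨆ x ∈ A,
          (a ε : EReal) * ENNReal.log (μ (X ε x ⁻¹' F))) (𝓝[>] (0:ℝ))
        ≤ -((⨅ x ∈ A, ⨅ φ ∈ F, I x φ : ℝ≥0∞) : EReal) := by
  intro A hA F hF
  set L : ℝ≥0∞ := ⨅ x ∈ A, ⨅ φ ∈ F, I x φ with hL
  set f : ℝ → EReal :=
    fun ε => ⨆ x ∈ A, (a ε : EReal) * ENNReal.log (μ (X ε x ⁻¹' F)) with hf
  have hbase : Filter.limsup f (𝓝[>] (0:ℝ)) ≤ 0 := by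
    have hev : ∀ᶠ ε in 𝓝[>] (0:ℝ), f ε ≤ (fun _ => (0:EReal)) ε := by
      filter_upwards [self_mem_nhdsWithin] with ε hε
      refine iSup₂_le fun x hx => ?_
      calc (a ε : EReal) * ENNReal.log (μ (X ε x ⁻¹' F))
          ≤ (a ε : EReal) * 0 := by
            refine mul_le_mul_of_nonneg_left ?_ (by exact_mod_cast (ha_pos ε hε).le)
            exact ENNReal.log_le_zero_iff.2 prob_le_one
        _ = 0 := mul_zero _
    calc Filter.limsup f (𝓝[>] (0:ℝ))
        ≤ Filter.limsup (fun _ => (0:EReal)) (𝓝[>] (0:ℝ)) := limsup_le_limsup hev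
      _ = 0 := limsup_const _
  have key : ∀ s : ℝ, 0 < s → ENNReal.ofReal s < L →
      Filter.limsup f (𝓝[>] (0:ℝ)) ≤ ((-s : ℝ) : EReal) := by
    intro s hs hsL
    have hgap : ∀ x ∈ A, ∀ φ ∈ F, ENNReal.ofReal s < I x φ := fun x hx φ hφ =>
      hsL.trans_le ((iInf₂_le x hx).trans (iInf₂_le φ hφ))
    obtain ⟨δ, hδ, hsep⟩ := fwuldp_sep_lemma I hgood hHaus A hA F hF s hs hgap
    set g : ℝ → EReal := fun ε =>
      ⨆ x ∈ A, ⨆ s' ∈ Set.Icc (0:ℝ) s,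
        ((a ε : EReal) * ENNReal.log
            (μ {ω | ENNReal.ofReal δ ≤
                EMetric.infEdist (X ε x ω) {φ | I x φ ≤ ENNReal.ofReal s'}})
          + (s' : EReal)) with hg
    have hup : Filter.limsup g (𝓝[>] (0:ℝ)) ≤ 0 := hFWup A hA s hs δ hδ
    set g' : ℝ → EReal := g + (fun _ => (-(s:ℝ) : EReal)) with hg'
    have hg'e : ∀ ε, g' ε = g ε + (-(s:ℝ) : EReal) := fun ε => rfl
    have hev : ∀ᶠ ε in 𝓝[>] (0:ℝ), f ε ≤ g' ε := by
      filter_upwards [self_mem_nhdsWithin] with ε hε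
      refine iSup₂_le fun x hx => ?_
      have hsub : X ε x ⁻¹' F ⊆ {ω | ENNReal.ofReal δ ≤
          EMetric.infEdist (X ε x ω) {φ | I x φ ≤ ENNReal.ofReal s}} :=
        fun ω hω => hsep x hx _ hω
      have h1 : (a ε : EReal) * ENNReal.log (μ (X ε x ⁻¹' F)) + (s : EReal) ≤ g ε := by
        refine le_trans ?_ (le_iSup₂_of_le x hx
          (le_iSup₂_of_le s ⟨hs.le, le_refl s⟩ le_rfl))
        refine add_le_add_left ?_ _
        refine mul_le_mul_of_nonneg_left ?_ (by exact_mod_cast (ha_pos ε hε).le)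
        exact ENNReal.log_monotone (measure_mono hsub)
      calc (a ε : EReal) * ENNReal.log (μ (X ε x ⁻¹' F))
          = (a ε : EReal) * ENNReal.log (μ (X ε x ⁻¹' F)) + (s : EReal)
              + (-(s:ℝ) : EReal) := by
            rw [← sub_eq_add_neg, EReal.add_sub_cancel_right]
        _ ≤ g ε + (-(s:ℝ) : EReal) := add_le_add_left h1 _
        _ = g' ε := (hg'e ε).symm
    calc Filter.limsup f (𝓝[>] (0:ℝ))
        ≤ Filter.limsup g' (𝓝[>] (0:ℝ)) := limsup_le_limsup hev
      _ ≤ Filter.limsup g (𝓝[>] (0:ℝ))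
          + Filter.limsup (fun _ => (-(s:ℝ) : EReal)) (𝓝[>] (0:ℝ)) := by
          refine EReal.limsup_add_le ?_ ?_
          · right; rw [limsup_const]; exact EReal.coe_ne_top _
          · right; rw [limsup_const]; exact EReal.coe_ne_bot _
      _ ≤ 0 + (-(s:ℝ) : EReal) := by
          rw [limsup_const]; exact add_le_add_left hup _
      _ = ((-s : ℝ) : EReal) := zero_add _
  by_contra hcon
  push_neg at hcon
  obtain ⟨r, hr1, hr2⟩ := EReal.exists_between_coe_real hcon
  have hr0 : r < 0 := by
    have h2 : (r : EReal) < ((0:ℝ) : EReal) := by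
      refine hr2.trans_le ?_
      simpa using hbase
    exact_mod_cast h2
  have hnr : (0:ℝ) < -r := by linarith
  have hsL : ENNReal.ofReal (-r) < L := by
    rw [← EReal.coe_ennreal_lt_coe_ennreal_iff, EReal.coe_ennreal_ofReal,
      max_eq_left hnr.le]
    have := EReal.neg_lt_comm.mp hr1
    push_cast at this ⊢
    convert this using 2
  have hkey := key (-r) hnr hsL
  rw [neg_neg] at hkey
  exact absurd hr2 (not_lt.2 hkey)
end

section
/- Under Assumption B, if $\{X^\epsilon_x\}$ satisfies the FWULDP over compact subsets of $\mathcal{E}_0$, then the Dembo-Zeitouni uniform lower bound holds: for every compact $A\subset\mathcal{E}_0$ and open $G\subset\mathcal{E}$, $\liminf_{\epsilon\to 0}\inf_{x\in A} a(\epsilon)\log\mathbb{P}(X^\epsilon_x\in G) \ge -\sup_{x\in A}\inf_{\varphi\in G} I_x(\varphi)$. -/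
open MeasureTheory Filter Topology
open scoped ENNReal NNReal

lemma exists_unif_delta {E E0 : Type*} [MetricSpace E] [MetricSpace E0]
    (I : E0 → E → ℝ≥0∞)
    (hHaus : ∀ s : ℝ, 0 ≤ s → ∀ (x : ℕ → E0) (x₀ : E0), Tendsto x atTop (𝓝 x₀) →
      Tendsto (fun n => EMetric.hausdorffEdist
          {φ | I (x n) φ ≤ ENNReal.ofReal s} {φ | I x₀ φ ≤ ENNReal.ofReal s})
        atTop (𝓝 (0 : ℝ≥0∞)))
    (A : Set E0) (hA : IsCompact A) (G : Set E) (hG : IsOpen G)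
    (s₀ : ℝ)
    (hx : ∀ x ∈ A, ∃ φ ∈ G, I x φ < ENNReal.ofReal s₀) :
    ∃ δ > (0:ℝ), ∀ x ∈ A, ∃ φ, I x φ ≤ ENNReal.ofReal s₀ ∧
      ∀ ψ, dist ψ φ < δ → ψ ∈ G := by
  have hpt : ∀ x₀ ∈ A, ∃ δ₀ > (0:ℝ), ∃ U ∈ 𝓝 x₀, ∀ x ∈ U,
      ∃ φ, I x φ ≤ ENNReal.ofReal s₀ ∧ ∀ ψ, dist ψ φ < δ₀ → ψ ∈ G := by
    intro x₀ hx₀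
    obtain ⟨φ₀, hφ₀G, hφ₀I⟩ := hx x₀ hx₀
    have hfin : I x₀ φ₀ ≠ ⊤ := (hφ₀I.trans ENNReal.ofReal_lt_top).ne
    set s' := (I x₀ φ₀).toReal with hs'def
    have hs' : 0 ≤ s' := ENNReal.toReal_nonneg
    have heq : ENNReal.ofReal s' = I x₀ φ₀ := ENNReal.ofReal_toReal hfin
    have hmem : φ₀ ∈ {φ | I x₀ φ ≤ ENNReal.ofReal s'} := by
      simp only [Set.mem_setOf_eq, heq, le_refl]
    have hs's₀ : ENNReal.ofReal s' ≤ ENNReal.ofReal s₀ := heq ▸ hφ₀I.le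
    obtain ⟨δ₀, hδ₀pos, hball⟩ := Metric.isOpen_iff.1 hG φ₀ hφ₀G
    have htd : Tendsto (fun x => EMetric.hausdorffEdist
        {φ | I x φ ≤ ENNReal.ofReal s'} {φ | I x₀ φ ≤ ENNReal.ofReal s'})
        (𝓝 x₀) (𝓝 (0:ℝ≥0∞)) := by
      rw [tendsto_iff_seq_tendsto]
      exact fun u hu => hHaus s' hs' u x₀ hu
    have hpos : (0:ℝ≥0∞) < ENNReal.ofReal (δ₀/2) := ENNReal.ofReal_pos.2 (by linarith)
    refine ⟨δ₀/2, by linarith, _, htd (Iio_mem_nhds hpos), ?_⟩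
    intro x hxU
    simp only [Set.mem_preimage, Set.mem_Iio] at hxU
    have h1 : EMetric.infEdist φ₀ {φ | I x φ ≤ ENNReal.ofReal s'} < ENNReal.ofReal (δ₀/2) :=
      lt_of_le_of_lt (EMetric.infEdist_le_hausdorffEdist_of_mem hmem)
        (by rwa [EMetric.hausdorffEdist_comm])
    obtain ⟨φ, hφlev, hφd⟩ := EMetric.infEdist_lt_iff.1 h1
    refine ⟨φ, le_trans hφlev hs's₀, ?_⟩
    intro ψ hψ
    apply hball
    rw [Metric.mem_ball]
    have h2 : dist φ₀ φ < δ₀/2 := by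
      rw [← ENNReal.ofReal_lt_ofReal_iff (by linarith), ← edist_dist] at *
      exact hφd
    calc dist ψ φ₀ ≤ dist ψ φ + dist φ φ₀ := dist_triangle _ _ _
      _ < δ₀/2 + δ₀/2 := by rw [dist_comm φ φ₀]; linarith
      _ = δ₀ := by ring
  choose! δ₀f hδ₀f U hU hloc using hpt
  obtain ⟨t, htA, hcov⟩ := hA.elim_nhds_subcover U hU
  rcases t.eq_empty_or_nonempty with hte | hne
  · refine ⟨1, one_pos, fun x hxA => absurd (hcov hxA) ?_⟩
    simp [hte]
  · refine ⟨t.inf' hne δ₀f, ?_, ?_⟩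
    · exact (Finset.lt_inf'_iff hne).2 fun b hb => hδ₀f b (htA b hb)
    · intro x hxA
      obtain ⟨x₀, hx₀t, hxU⟩ := Set.mem_iUnion₂.1 (hcov hxA)
      obtain ⟨φ, h1, h2⟩ := hloc x₀ (htA x₀ hx₀t) x hxU
      exact ⟨φ, h1, fun ψ hψ => h2 ψ (lt_of_lt_of_le hψ (Finset.inf'_le _ hx₀t))⟩


/-- Under Assumption B (E₀ Polish, 𝒜 the compact subsets, each Iₓ a good rate function,
and level sets continuous in the Hausdorff metric), the FWULDP over compact sets implies
the Dembo-Zeitouni uniform lower bound. -/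
theorem fwuldp_implies_dz_uniform_lower
    {E : Type*} [MetricSpace E] [PolishSpace E] [MeasurableSpace E] [BorelSpace E]
    {E0 : Type*} [MetricSpace E0] [PolishSpace E0]
    {Ω : Type*} [MeasurableSpace Ω] (μ : Measure Ω) [IsProbabilityMeasure μ]
    (X : ℝ → E0 → Ω → E) (hX : ∀ ε x, Measurable (X ε x))
    (a : ℝ → ℝ) (ha_pos : ∀ ε > 0, 0 < a ε)
    (ha : Tendsto a (𝓝[>] (0:ℝ)) (𝓝 0))
    (I : E0 → E → ℝ≥0∞) (hI : ∀ x, LowerSemicontinuous (I x))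
    -- each I x is a good rate function
    (hgood : ∀ x : E0, ∀ s : ℝ, IsCompact {φ | I x φ ≤ ENNReal.ofReal s})
    -- level sets are continuous in the Hausdorff metric
    (hHaus : ∀ s : ℝ, 0 ≤ s → ∀ (x : ℕ → E0) (x₀ : E0), Tendsto x atTop (𝓝 x₀) →
      Tendsto (fun n => EMetric.hausdorffEdist
          {φ | I (x n) φ ≤ ENNReal.ofReal s} {φ | I x₀ φ ≤ ENNReal.ofReal s})
        atTop (𝓝 (0 : ℝ≥0∞)))
    -- FWULDP lower bound over compact subsets of E0
    (hFWlow : ∀ A : Set E0, IsCompact A → ∀ s₀ > (0:ℝ), ∀ δ > (0:ℝ),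
      (0 : EReal) ≤ Filter.liminf (fun ε =>
        ⨅ x ∈ A, ⨅ φ ∈ {ψ | I x ψ ≤ ENNReal.ofReal s₀},
          ((a ε : EReal) * ENNReal.log (μ {ω | dist (X ε x ω) φ < δ})
            + (I x φ : EReal))) (𝓝[>] (0:ℝ)))
    -- FWULDP upper bound over compact subsets of E0
    (hFWup : ∀ A : Set E0, IsCompact A → ∀ s₀ > (0:ℝ), ∀ δ > (0:ℝ),
      Filter.limsup (fun ε =>
        ⨆ x ∈ A, ⨆ s ∈ Set.Icc (0:ℝ) s₀,
          ((a ε : EReal) * ENNReal.log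
              (μ {ω | ENNReal.ofReal δ ≤
                  EMetric.infEdist (X ε x ω) {φ | I x φ ≤ ENNReal.ofReal s}})
            + (s : EReal))) (𝓝[>] (0:ℝ)) ≤ 0) :
    -- Dembo-Zeitouni uniform lower bound
    ∀ A : Set E0, IsCompact A → ∀ G : Set E, IsOpen G →
      -((⨆ x ∈ A, ⨅ φ ∈ G, I x φ : ℝ≥0∞) : EReal)
        ≤ Filter.liminf (fun ε => ⨅ x ∈ A,
            (a ε : EReal) * ENNReal.log (μ (X ε x ⁻¹' G))) (𝓝[>] (0:ℝ)) := by
  intro A hA G hG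
  set S : ℝ≥0∞ := ⨆ x ∈ A, ⨅ φ ∈ G, I x φ with hSdef
  by_cases hS : S = ⊤
  · rw [hS]
    simp [EReal.coe_ennreal_top]
  refine le_of_forall_lt fun c hc => ?_
  -- represent -(S : EReal) as a real coercion
  have hcoe : (S : EReal) = ((S.toReal : ℝ) : EReal) := by
    conv_lhs => rw [← ENNReal.ofReal_toReal hS]
    rw [EReal.coe_ennreal_ofReal]
    exact max_eq_left (EReal.coe_nonneg.2 ENNReal.toReal_nonneg)
  obtain ⟨u, hcu, huS⟩ := EReal.exists_between_coe_real hc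
  have huS' : u < -S.toReal := by
    rw [hcoe, ← EReal.coe_neg] at huS
    exact_mod_cast huS
  set s₀ := (S.toReal + (-u))/2 with hs₀def
  have hs₀S : S.toReal < s₀ := by rw [hs₀def]; linarith
  have hs₀u : s₀ < -u := by rw [hs₀def]; linarith
  have hs₀pos : (0:ℝ) < s₀ := lt_of_le_of_lt ENNReal.toReal_nonneg hs₀S
  set η := -u - s₀ with hηdef
  have hη : (0:ℝ) < η := by rw [hηdef]; linarith
  -- for every x ∈ A there is φ ∈ G with small rate
  have hxsel : ∀ x ∈ A, ∃ φ ∈ G, I x φ < ENNReal.ofReal s₀ := by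
    intro x hxA
    have h1 : (⨅ φ ∈ G, I x φ) ≤ S :=
      le_iSup₂ (f := fun (x : E0) (_ : x ∈ A) => ⨅ φ ∈ G, I x φ) x hxA
    have h2 : (⨅ φ ∈ G, I x φ) < ENNReal.ofReal s₀ :=
      lt_of_le_of_lt h1 (by
        rw [← ENNReal.ofReal_toReal hS]
        exact (ENNReal.ofReal_lt_ofReal_iff hs₀pos).2 hs₀S)
    obtain ⟨φ, hφ⟩ := iInf_lt_iff.1 h2
    obtain ⟨hφG, hφlt⟩ := iInf_lt_iff.1 hφ
    exact ⟨φ, hφG, hφlt⟩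
  obtain ⟨δ, hδpos, hφsel⟩ := exists_unif_delta I hHaus A hA G hG s₀ hxsel
  choose φf hφfI hφfball using hφsel
  have hlim := hFWlow A hA s₀ hs₀pos δ hδpos
  have hev1 : ∀ᶠ ε in 𝓝[>] (0:ℝ), ((-η : ℝ) : EReal) < ⨅ x ∈ A,
      ⨅ φ ∈ {ψ | I x ψ ≤ ENNReal.ofReal s₀},
        ((a ε : EReal) * ENNReal.log (μ {ω | dist (X ε x ω) φ < δ}) + (I x φ : EReal)) := by
    have hneg : ((-η : ℝ) : EReal) < (0 : EReal) := by
      exact_mod_cast (by linarith : -η < (0:ℝ))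
    exact eventually_lt_of_lt_liminf (lt_of_lt_of_le hneg hlim)
  have hev2 : ∀ᶠ ε in 𝓝[>] (0:ℝ), (0:ℝ) < ε := eventually_mem_nhdsWithin
  have key : ∀ᶠ ε in 𝓝[>] (0:ℝ),
      (u : EReal) ≤ ⨅ x ∈ A, (a ε : EReal) * ENNReal.log (μ (X ε x ⁻¹' G)) := by
    filter_upwards [hev1, hev2] with ε hf₀ hεpos
    refine le_iInf₂ fun x hxA => ?_
    have hmemlev : φf x hxA ∈ {ψ | I x ψ ≤ ENNReal.ofReal s₀} := hφfI x hxA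
    have h3 : (⨅ x ∈ A, ⨅ φ ∈ {ψ | I x ψ ≤ ENNReal.ofReal s₀},
        ((a ε : EReal) * ENNReal.log (μ {ω | dist (X ε x ω) φ < δ}) + (I x φ : EReal)))
        ≤ (a ε : EReal) * ENNReal.log (μ {ω | dist (X ε x ω) (φf x hxA) < δ})
            + (I x (φf x hxA) : EReal) :=
      iInf₂_le_of_le x hxA (iInf₂_le _ hmemlev)
    have hIle : ((I x (φf x hxA) : EReal)) ≤ (s₀ : EReal) := by
      calc (I x (φf x hxA) : EReal) ≤ ((ENNReal.ofReal s₀ : ℝ≥0∞) : EReal) :=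
            EReal.coe_ennreal_le_coe_ennreal_iff.2 (hφfI x hxA)
        _ = (s₀ : EReal) := by
            rw [EReal.coe_ennreal_ofReal, max_eq_left hs₀pos.le]
    have h4 : ((-η : ℝ) : EReal)
        < (a ε : EReal) * ENNReal.log (μ {ω | dist (X ε x ω) (φf x hxA) < δ}) + (s₀ : EReal) :=
      lt_of_lt_of_le hf₀ (h3.trans (add_le_add_right hIle _))
    have h5 : (u : EReal) < (a ε : EReal) * ENNReal.log (μ {ω | dist (X ε x ω) (φf x hxA) < δ}) := by
      have heq : ((-η : ℝ) : EReal) = (u : EReal) + (s₀ : EReal) := by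
        rw [← EReal.coe_add]
        norm_cast
        rw [hηdef]; ring
      rw [heq] at h4
      exact lt_of_not_ge fun hle => absurd h4 (not_lt.2 (add_le_add_left hle _))
    have hsub : {ω | dist (X ε x ω) (φf x hxA) < δ} ⊆ X ε x ⁻¹' G :=
      fun ω hω => hφfball x hxA _ hω
    have h6 : (a ε : EReal) * ENNReal.log (μ {ω | dist (X ε x ω) (φf x hxA) < δ})
        ≤ (a ε : EReal) * ENNReal.log (μ (X ε x ⁻¹' G)) := by
      apply mul_le_mul_of_nonneg_left (ENNReal.log_monotone (measure_mono hsub))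
      exact_mod_cast (ha_pos ε hεpos).le
    exact (h5.trans_le h6).le
  have hfin : (u : EReal) ≤ Filter.liminf
      (fun ε => ⨅ x ∈ A, (a ε : EReal) * ENNReal.log (μ (X ε x ⁻¹' G))) (𝓝[>] (0:ℝ)) :=
    le_liminf_of_le (by isBoundedDefault) key
  exact lt_of_lt_of_le hcu hfin
end
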